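/- arXiv:1901.10376 — 8 statements merged into one kernel-verified Lean document; each statement's English description precedes it below -/
import Mathlib

section
/- Fix α ∈ (0,1) and define ψ(i,j) = Γ(i+1)/Γ(i+1−α) + Γ(j+1)/Γ(j+1−α) − Γ(i+j+1)/Γ(i+j+1−α) for natural numbers i, j. Then for every i ≥ 0, j > 0 and k > 0 one has ψ(i+k, j) > ψ(i, j), and ψ(i, 0) = 1/Γ(1−α) > 0 for all i ≥ 0. -/
noncomputable def psi (α : ℝ) (i j : ℕ) : ℝ :=
  Real.Gamma ((i : ℝ) + 1) / Real.Gamma ((i : ℝ) + 1 - α)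
    + Real.Gamma ((j : ℝ) + 1) / Real.Gamma ((j : ℝ) + 1 - α)
    - Real.Gamma ((i : ℝ) + (j : ℝ) + 1) / Real.Gamma ((i : ℝ) + (j : ℝ) + 1 - α)

section aux

variable (α : ℝ)

noncomputable def psiF (n : ℕ) : ℝ :=
  Real.Gamma ((n : ℝ) + 1) / Real.Gamma ((n : ℝ) + 1 - α)

noncomputable def psiG (n : ℕ) : ℝ :=
  Real.Gamma ((n : ℝ) + 1) / Real.Gamma ((n : ℝ) + 2 - α)

variable {α}

lemma gammaA_pos (n : ℕ) : 0 < Real.Gamma ((n : ℝ) + 1) :=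
  Real.Gamma_pos_of_pos (by positivity)

lemma gammaB_pos (hα1 : α < 1) (n : ℕ) : 0 < Real.Gamma ((n : ℝ) + 1 - α) := by
  have hn : (0:ℝ) ≤ n := Nat.cast_nonneg n
  exact Real.Gamma_pos_of_pos (by linarith)

lemma gammaC_pos (hα1 : α < 1) (n : ℕ) : 0 < Real.Gamma ((n : ℝ) + 2 - α) := by
  have hn : (0:ℝ) ≤ n := Nat.cast_nonneg n
  exact Real.Gamma_pos_of_pos (by linarith)

lemma gammaA_succ (n : ℕ) :
    Real.Gamma ((n : ℝ) + 2) = ((n : ℝ) + 1) * Real.Gamma ((n : ℝ) + 1) := by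
  have h : ((n : ℝ) + 1) ≠ 0 := by positivity
  have := Real.Gamma_add_one h
  convert this using 2 <;> ring

lemma gammaB_succ (hα1 : α < 1) (n : ℕ) :
    Real.Gamma ((n : ℝ) + 2 - α) = ((n : ℝ) + 1 - α) * Real.Gamma ((n : ℝ) + 1 - α) := by
  have hn : (0:ℝ) ≤ n := Nat.cast_nonneg n
  have h : ((n : ℝ) + 1 - α) ≠ 0 := by intro h'; linarith [h'.symm.le]
  have := Real.Gamma_add_one h
  convert this using 2 <;> ring

lemma gammaC_succ (hα1 : α < 1) (n : ℕ) :
    Real.Gamma ((n : ℝ) + 3 - α) = ((n : ℝ) + 2 - α) * Real.Gamma ((n : ℝ) + 2 - α) := by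
  have hn : (0:ℝ) ≤ n := Nat.cast_nonneg n
  have h : ((n : ℝ) + 2 - α) ≠ 0 := by intro h'; linarith [h'.symm.le]
  have := Real.Gamma_add_one h
  convert this using 2 <;> ring

lemma psiF_succ (hα1 : α < 1) (n : ℕ) :
    psiF α (n + 1) = psiF α n + α * psiG α n := by
  unfold psiF psiG
  have hc : ((n + 1 : ℕ) : ℝ) = (n : ℝ) + 1 := by push_cast; ring
  rw [hc, show ((n : ℝ) + 1 + 1) = (n : ℝ) + 2 from by ring,
    gammaA_succ n, gammaB_succ hα1 n]
  have h1 : Real.Gamma ((n : ℝ) + 1 - α) ≠ 0 := (gammaB_pos hα1 n).ne'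
  have hn : (0:ℝ) ≤ n := Nat.cast_nonneg n
  have h2 : ((n : ℝ) + 1 - α) ≠ 0 := by intro h'; linarith [h'.symm.le]
  field_simp
  ring

lemma psiG_anti (hα1 : α < 1) (n : ℕ) : psiG α (n + 1) < psiG α n := by
  unfold psiG
  have hc : ((n + 1 : ℕ) : ℝ) = (n : ℝ) + 1 := by push_cast; ring
  rw [hc, show ((n : ℝ) + 1 + 1) = (n : ℝ) + 2 from by ring,
    show ((n : ℝ) + 1 + 2 - α) = (n : ℝ) + 3 - α from by ring,
    gammaA_succ n, gammaC_succ hα1 n]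
  have hC3 : (0:ℝ) < ((n : ℝ) + 2 - α) * Real.Gamma ((n : ℝ) + 2 - α) := by
    have hn : (0:ℝ) ≤ n := Nat.cast_nonneg n
    have := gammaC_pos hα1 n
    nlinarith
  rw [div_lt_div_iff₀ hC3 (gammaC_pos hα1 n)]
  have hA := gammaA_pos n
  have hC := gammaC_pos hα1 n
  have hn : (0:ℝ) ≤ n := Nat.cast_nonneg n
  nlinarith [mul_pos hA hC]

lemma psiG_lt (hα1 : α < 1) {m n : ℕ} (h : m < n) : psiG α n < psiG α m := by
  induction n with
  | zero => omega
  | succ n ih =>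
    rcases Nat.lt_succ_iff_lt_or_eq.mp h with h' | h'
    · exact (psiG_anti hα1 n).trans (ih h')
    · exact h' ▸ psiG_anti hα1 n

lemma psi_eq (i j : ℕ) : psi α i j = psiF α i + psiF α j - psiF α (i + j) := by
  unfold psi psiF
  push_cast
  ring_nf

lemma psi_step (hα0 : 0 < α) (hα1 : α < 1) (i j : ℕ) (hj : 0 < j) :
    psi α i j < psi α (i + 1) j := by
  rw [psi_eq, psi_eq]
  have h1 : psiF α (i + 1) = psiF α i + α * psiG α i := psiF_succ hα1 i
  have h2 : psiF α (i + 1 + j) = psiF α (i + j) + α * psiG α (i + j) := by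
    have : i + 1 + j = (i + j) + 1 := by omega
    rw [this]; exact psiF_succ hα1 (i + j)
  rw [h1, h2]
  have h3 : psiG α (i + j) < psiG α i := psiG_lt hα1 (by omega)
  nlinarith

end aux

/-- Monotonicity of ψ in its first argument (when the second is positive), and
constancy and positivity of ψ(·,0). -/
theorem psi_strict_mono_and_psi_zero (α : ℝ) (hα : α ∈ Set.Ioo (0:ℝ) 1) :
    (∀ i j k : ℕ, 0 < j → 0 < k → psi α i j < psi α (i + k) j) ∧
      (∀ i : ℕ, psi α i 0 = 1 / Real.Gamma (1 - α) ∧ 0 < 1 / Real.Gamma (1 - α)) := by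
  obtain ⟨hα0, hα1⟩ := hα
  constructor
  · intro i j k hj hk
    induction k with
    | zero => omega
    | succ k ih =>
      rcases Nat.eq_zero_or_pos k with h | h
      · subst h; exact psi_step hα0 hα1 i j hj
      · have := psi_step hα0 hα1 (i + k) j hj
        have h' : i + k + 1 = i + (k + 1) := by omega
        rw [h'] at this
        exact (ih h).trans this
  · intro i
    have hpos : 0 < Real.Gamma (1 - α) := Real.Gamma_pos_of_pos (by linarith)
    constructor
    · unfold psi
      simp [Real.Gamma_one]
    · positivity
end

section
/- Fix α ∈ (0,1). For all integers i ≥ 0 and j > 0, the inequality Γ(i+1)Γ(i+j+2−α) > Γ(i+2−α)Γ(i+j+1) holds. -/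
lemma gamma_ratio_aux (b x : ℝ) (hb : 0 < b) (hx : 0 < x) :
    ∀ k : ℕ, Real.Gamma (x + b) * Real.Gamma (x + k + 1)
      < Real.Gamma x * Real.Gamma (x + k + 1 + b)
  | 0 => by
    have h1 : Real.Gamma (x + 0 + 1) = x * Real.Gamma x := by
      rw [add_zero, Real.Gamma_add_one (ne_of_gt hx)]
    have h2 : Real.Gamma (x + 0 + 1 + b) = (x + b) * Real.Gamma (x + b) := by
      have : x + 0 + 1 + b = (x + b) + 1 := by ring
      rw [this, Real.Gamma_add_one (by positivity)]
    have g1 : 0 < Real.Gamma x := Real.Gamma_pos_of_pos hx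
    have g2 : 0 < Real.Gamma (x + b) := Real.Gamma_pos_of_pos (by positivity)
    push_cast
    rw [h1, h2]; nlinarith [mul_pos (mul_pos g1 g2) hb]
  | (k+1) => by
    have ih := gamma_ratio_aux b x hb hx k
    have hk : (0:ℝ) < x + k + 1 := by positivity
    have h1 : Real.Gamma (x + (k+1 : ℕ) + 1) = (x + k + 1) * Real.Gamma (x + k + 1) := by
      have : x + (k+1 : ℕ) + 1 = (x + k + 1) + 1 := by push_cast; ring
      rw [this, Real.Gamma_add_one (ne_of_gt hk)]
    have h2 : Real.Gamma (x + (k+1 : ℕ) + 1 + b)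
        = (x + k + 1 + b) * Real.Gamma (x + k + 1 + b) := by
      have : x + (k+1 : ℕ) + 1 + b = (x + k + 1 + b) + 1 := by push_cast; ring
      rw [this, Real.Gamma_add_one (by positivity)]
    have g1 : 0 < Real.Gamma x := Real.Gamma_pos_of_pos hx
    have g2 : 0 < Real.Gamma (x + b) := Real.Gamma_pos_of_pos (by positivity)
    have g3 : 0 < Real.Gamma (x + k + 1) := Real.Gamma_pos_of_pos (by positivity)
    have g4 : 0 < Real.Gamma (x + k + 1 + b) := Real.Gamma_pos_of_pos (by positivity)
    rw [h1, h2]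
    nlinarith [mul_lt_mul_of_pos_left ih hk, mul_pos (mul_pos g1 g4) hb]

/-- The key gamma-ratio inequality: Γ(i+1)Γ(i+j+2-α) > Γ(i+2-α)Γ(i+j+1). -/
theorem gamma_ratio_inequality (α : ℝ) (hα : α ∈ Set.Ioo (0:ℝ) 1) (i j : ℕ) (hj : 0 < j) :
    Real.Gamma ((i : ℝ) + 2 - α) * Real.Gamma ((i : ℝ) + (j : ℝ) + 1)
      < Real.Gamma ((i : ℝ) + 1) * Real.Gamma ((i : ℝ) + (j : ℝ) + 2 - α) := by
  obtain ⟨hα0, hα1⟩ := hα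
  have := gamma_ratio_aux (1 - α) ((i : ℝ) + 1) (by linarith) (by positivity) (j - 1)
  have hj1 : ((j - 1 : ℕ) : ℝ) = (j : ℝ) - 1 := by
    have : (1:ℕ) ≤ j := hj
    push_cast [this]; ring
  rw [hj1] at this
  have e1 : (i : ℝ) + 1 + (1 - α) = (i : ℝ) + 2 - α := by ring
  have e2 : (i : ℝ) + 1 + ((j:ℝ) - 1) + 1 = (i : ℝ) + (j : ℝ) + 1 := by ring
  have e3 : (i : ℝ) + (j:ℝ) + 1 + (1 - α) = (i : ℝ) + (j : ℝ) + 2 - α := by ring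
  rw [e1, e2, e3] at this
  exact this
end

section
/- Let α ∈ (0,1), i, j ∈ ℕ, and let k, l satisfy 0 ≤ k ≤ i−1 and 0 ≤ l ≤ j−1. Define φ(m,1) = (1−α)Γ(m+1)/Γ(m+3−α). Then φ(k+l,1)·φ(i+j,1) − φ(i+l,1)·φ(j+k,1) > 0. -/
noncomputable def phiOne (α : ℝ) (m : ℕ) : ℝ :=
  (1 - α) * Real.Gamma ((m : ℝ) + 1) / Real.Gamma ((m : ℝ) + 3 - α)

noncomputable def gAux (α : ℝ) (m : ℕ) : ℝ :=
  Real.Gamma ((m : ℝ) + 1) / Real.Gamma ((m : ℝ) + 3 - α)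

lemma gAux_pos (α : ℝ) (hα : α < 1) (m : ℕ) : 0 < gAux α m := by
  apply div_pos
  · exact Real.Gamma_pos_of_pos (by positivity)
  · exact Real.Gamma_pos_of_pos (by have : (0:ℝ) ≤ m := Nat.cast_nonneg m; linarith)

lemma gAux_rec (α : ℝ) (hα : α < 1) (m : ℕ) :
    gAux α (m + 1) = (((m : ℝ) + 1) / ((m : ℝ) + 3 - α)) * gAux α m := by
  have hm : (0:ℝ) ≤ m := Nat.cast_nonneg m
  have h1 : ((m : ℝ) + 1) ≠ 0 := by linarith
  have h2 : ((m : ℝ) + 3 - α) ≠ 0 := by linarith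
  unfold gAux
  push_cast
  have e1 : (m : ℝ) + 1 + 1 = ((m : ℝ) + 1) + 1 := by ring
  have e2 : (m : ℝ) + 1 + 3 - α = ((m : ℝ) + 3 - α) + 1 := by ring
  rw [e1, e2, Real.Gamma_add_one h1, Real.Gamma_add_one h2]
  field_simp

lemma gAux_step (α : ℝ) (hα : α < 1) {m n : ℕ} (h : m < n) :
    gAux α (m + 1) * gAux α n < gAux α m * gAux α (n + 1) := by
  rw [gAux_rec α hα m, gAux_rec α hα n]
  have hgm := gAux_pos α hα m
  have hgn := gAux_pos α hα n
  have hm : (0:ℝ) ≤ m := Nat.cast_nonneg m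
  have hn : (0:ℝ) ≤ n := Nat.cast_nonneg n
  have hmn : (m:ℝ) + 1 ≤ (n:ℝ) := by exact_mod_cast h
  have hdm : (0:ℝ) < (m:ℝ) + 3 - α := by linarith
  have hdn : (0:ℝ) < (n:ℝ) + 3 - α := by linarith
  have hr : ((m : ℝ) + 1) / ((m : ℝ) + 3 - α) < ((n : ℝ) + 1) / ((n : ℝ) + 3 - α) := by
    rw [div_lt_div_iff₀ hdm hdn]
    nlinarith
  calc ((m : ℝ) + 1) / ((m : ℝ) + 3 - α) * gAux α m * gAux α n
      < ((n : ℝ) + 1) / ((n : ℝ) + 3 - α) * gAux α m * gAux α n := by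
        apply mul_lt_mul_of_pos_right (mul_lt_mul_of_pos_right hr hgm) hgn
    _ = gAux α m * (((n : ℝ) + 1) / ((n : ℝ) + 3 - α) * gAux α n) := by ring

lemma gAux_main (α : ℝ) (hα : α < 1) :
    ∀ t a d : ℕ, a + t < d →
      gAux α (a + t + 1) * gAux α d < gAux α a * gAux α (d + t + 1) := by
  intro t
  induction t with
  | zero =>
    intro a d h
    simpa using gAux_step α hα (by omega : a < d)
  | succ t ih =>
    intro a d h
    have h1 : gAux α (a + (t + 1) + 1) * gAux α d < gAux α (a + 1) * gAux α (d + t + 1) := by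
      have := ih (a + 1) d (by omega)
      have e : a + 1 + t + 1 = a + (t + 1) + 1 := by omega
      rwa [e] at this
    have h2 : gAux α (a + 1) * gAux α (d + t + 1) < gAux α a * gAux α (d + (t + 1) + 1) := by
      have := gAux_step α hα (by omega : a < d + t + 1)
      have e : d + t + 1 + 1 = d + (t + 1) + 1 := by omega
      rwa [e] at this
    linarith

lemma phiOne_eq (α : ℝ) (m : ℕ) : phiOne α m = (1 - α) * gAux α m := by
  unfold phiOne gAux; ring

/-- The strict inequality φ(k+l,1)φ(i+j,1) - φ(i+l,1)φ(j+k,1) > 0. -/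
theorem phi_product_inequality (α : ℝ) (hα : α ∈ Set.Ioo (0:ℝ) 1)
    (i j k l : ℕ) (hk : k ≤ i - 1) (hi : 1 ≤ i) (hl : l ≤ j - 1) (hj : 1 ≤ j) :
    0 < phiOne α (k + l) * phiOne α (i + j) - phiOne α (i + l) * phiOne α (j + k) := by
  obtain ⟨hα0, hα1⟩ := hα
  have hki : k < i := by omega
  have hlj : l < j := by omega
  have key : gAux α (i + l) * gAux α (j + k) < gAux α (k + l) * gAux α (i + j) := by
    rcases le_total (i + l) (j + k) with hc | hc
    · -- c = i + l, d = j + k, a = k + l, t + 1 = c - a = i - k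
      have := gAux_main α hα1 (i - k - 1) (k + l) (j + k) (by omega)
      have e1 : k + l + (i - k - 1) + 1 = i + l := by omega
      have e2 : j + k + (i - k - 1) + 1 = i + j := by omega
      rwa [e1, e2] at this
    · have := gAux_main α hα1 (j - l - 1) (k + l) (i + l) (by omega)
      have e1 : k + l + (j - l - 1) + 1 = j + k := by omega
      have e2 : i + l + (j - l - 1) + 1 = i + j := by omega
      rw [e1, e2] at this
      linarith [mul_comm (gAux α (j + k)) (gAux α (i + l))]
  have h1α : 0 < 1 - α := by linarith
  simp only [phiOne_eq]
  nlinarith [mul_lt_mul_of_pos_left key (mul_pos h1α h1α)]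
end

section
/- Fix α ∈ (0,1) and set ψ(i,j) = Γ(i+1)/Γ(i+1−α) + Γ(j+1)/Γ(j+1−α) − Γ(i+j+1)/Γ(i+j+1−α). Then the symmetric 2×2 matrix with entries ψ(2,2), ψ(1,2), ψ(2,1), ψ(1,1) is positive definite; in particular ψ(2,2) = 4(6−α)(1−α)/Γ(5−α) > 0 and ψ(1,1)ψ(2,2) − ψ(1,2)² = α(1−α)²(2−α)(6−α)/(Γ(4−α)Γ(5−α)) > 0. -/
section aux

lemma g2_pos {α : ℝ} (hα : α ∈ Set.Ioo (0:ℝ) 1) : 0 < Real.Gamma (2 - α) :=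
  Real.Gamma_pos_of_pos (by linarith [hα.2])

lemma g3_eq {α : ℝ} (hα : α ∈ Set.Ioo (0:ℝ) 1) :
    Real.Gamma (3 - α) = (2 - α) * Real.Gamma (2 - α) := by
  have h1 := hα.2
  have := Real.Gamma_add_one (show (2:ℝ) - α ≠ 0 by intro h; linarith [sub_eq_zero.mp h])
  rw [show (2:ℝ) - α + 1 = 3 - α by ring] at this
  exact this

lemma g4_eq {α : ℝ} (hα : α ∈ Set.Ioo (0:ℝ) 1) :
    Real.Gamma (4 - α) = (3 - α) * Real.Gamma (3 - α) := by
  have h1 := hα.2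
  have := Real.Gamma_add_one (show (3:ℝ) - α ≠ 0 by intro h; linarith [sub_eq_zero.mp h])
  rw [show (3:ℝ) - α + 1 = 4 - α by ring] at this
  exact this

lemma g5_eq {α : ℝ} (hα : α ∈ Set.Ioo (0:ℝ) 1) :
    Real.Gamma (5 - α) = (4 - α) * Real.Gamma (4 - α) := by
  have h1 := hα.2
  have := Real.Gamma_add_one (show (4:ℝ) - α ≠ 0 by intro h; linarith [sub_eq_zero.mp h])
  rw [show (4:ℝ) - α + 1 = 5 - α by ring] at this
  exact this

lemma gamma2_val : Real.Gamma 2 = 1 := by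
  rw [show (2:ℝ) = ((1:ℕ):ℝ) + 1 by norm_num, Real.Gamma_nat_eq_factorial]
  norm_num [Nat.factorial]

lemma gamma3_val : Real.Gamma 3 = 2 := by
  rw [show (3:ℝ) = ((2:ℕ):ℝ) + 1 by norm_num, Real.Gamma_nat_eq_factorial]
  norm_num [Nat.factorial]

lemma gamma4_val : Real.Gamma 4 = 6 := by
  rw [show (4:ℝ) = ((3:ℕ):ℝ) + 1 by norm_num, Real.Gamma_nat_eq_factorial]
  norm_num [Nat.factorial]

lemma gamma5_val : Real.Gamma 5 = 24 := by
  rw [show (5:ℝ) = ((4:ℕ):ℝ) + 1 by norm_num, Real.Gamma_nat_eq_factorial]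
  norm_num [Nat.factorial]

lemma psi11_eq {α : ℝ} (hα : α ∈ Set.Ioo (0:ℝ) 1) :
    psi α 1 1 = 2 * (1 - α) / Real.Gamma (3 - α) := by
  have hg2 := g2_pos hα
  have h3 := g3_eq hα
  have n2 : (2:ℝ) - α ≠ 0 := by have := hα.2; intro h; linarith [sub_eq_zero.mp h]
  have key : psi α 1 1
      = Real.Gamma 2 / Real.Gamma (2 - α) + Real.Gamma 2 / Real.Gamma (2 - α)
        - Real.Gamma 3 / Real.Gamma (3 - α) := by
    unfold psi; norm_num
  rw [key, gamma2_val, gamma3_val, h3]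
  field_simp
  ring

lemma psi12_eq {α : ℝ} (hα : α ∈ Set.Ioo (0:ℝ) 1) :
    psi α 1 2 = (1 - α) * (6 - α) / Real.Gamma (4 - α) := by
  have hg2 := g2_pos hα
  have h3 := g3_eq hα
  have h4 := g4_eq hα
  have n2 : (2:ℝ) - α ≠ 0 := by have := hα.2; intro h; linarith [sub_eq_zero.mp h]
  have n3 : (3:ℝ) - α ≠ 0 := by have := hα.2; intro h; linarith [sub_eq_zero.mp h]
  have key : psi α 1 2
      = Real.Gamma 2 / Real.Gamma (2 - α) + Real.Gamma 3 / Real.Gamma (3 - α)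
        - Real.Gamma 4 / Real.Gamma (4 - α) := by
    unfold psi; norm_num
  rw [key, gamma2_val, gamma3_val, gamma4_val, h4, h3]
  field_simp
  ring

lemma psi22_eq {α : ℝ} (hα : α ∈ Set.Ioo (0:ℝ) 1) :
    psi α 2 2 = 4 * (6 - α) * (1 - α) / Real.Gamma (5 - α) := by
  have hg2 := g2_pos hα
  have h3 := g3_eq hα
  have h4 := g4_eq hα
  have h5 := g5_eq hα
  have n2 : (2:ℝ) - α ≠ 0 := by have := hα.2; intro h; linarith [sub_eq_zero.mp h]
  have n3 : (3:ℝ) - α ≠ 0 := by have := hα.2; intro h; linarith [sub_eq_zero.mp h]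
  have n4 : (4:ℝ) - α ≠ 0 := by have := hα.2; intro h; linarith [sub_eq_zero.mp h]
  have key : psi α 2 2
      = Real.Gamma 3 / Real.Gamma (3 - α) + Real.Gamma 3 / Real.Gamma (3 - α)
        - Real.Gamma 5 / Real.Gamma (5 - α) := by
    unfold psi; norm_num
  rw [key, gamma3_val, gamma5_val, h5, h4, h3]
  field_simp
  ring

end aux

/-- The 2×2 matrix (ψ(2,2), ψ(1,2); ψ(2,1), ψ(1,1)) is positive definite, with the
explicit values of its leading principal minors. -/
theorem psi_two_by_two_posDef (α : ℝ) (hα : α ∈ Set.Ioo (0:ℝ) 1) :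
    (Matrix.of ![![psi α 2 2, psi α 1 2], ![psi α 2 1, psi α 1 1]]).PosDef ∧
      psi α 2 2 = 4 * (6 - α) * (1 - α) / Real.Gamma (5 - α) ∧
      0 < psi α 2 2 ∧
      psi α 1 1 * psi α 2 2 - psi α 1 2 ^ 2
        = α * (1 - α) ^ 2 * (2 - α) * (6 - α) / (Real.Gamma (4 - α) * Real.Gamma (5 - α)) ∧
      0 < psi α 1 1 * psi α 2 2 - psi α 1 2 ^ 2 := by
  obtain ⟨h0, h1⟩ := hα
  have hα' : α ∈ Set.Ioo (0:ℝ) 1 := ⟨h0, h1⟩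
  have hg2 := g2_pos hα'
  have h3 := g3_eq hα'
  have h4 := g4_eq hα'
  have h5 := g5_eq hα'
  have hg3 : 0 < Real.Gamma (3 - α) := by rw [h3]; nlinarith
  have hg4 : 0 < Real.Gamma (4 - α) := by rw [h4]; nlinarith
  have hg5 : 0 < Real.Gamma (5 - α) := by rw [h5]; nlinarith
  have n2 : (2:ℝ) - α ≠ 0 := by intro h; linarith [sub_eq_zero.mp h]
  have n3 : (3:ℝ) - α ≠ 0 := by intro h; linarith [sub_eq_zero.mp h]
  have n4 : (4:ℝ) - α ≠ 0 := by intro h; linarith [sub_eq_zero.mp h]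
  have p11 := psi11_eq hα'
  have p12 := psi12_eq hα'
  have p22 := psi22_eq hα'
  have p21 : psi α 2 1 = psi α 1 2 := by unfold psi; ring_nf
  have h22pos : 0 < psi α 2 2 := by
    rw [p22]; apply div_pos (by nlinarith) hg5
  have h11pos : 0 < psi α 1 1 := by
    rw [p11]; apply div_pos (by nlinarith) hg3
  have hdet : psi α 1 1 * psi α 2 2 - psi α 1 2 ^ 2
      = α * (1 - α) ^ 2 * (2 - α) * (6 - α) / (Real.Gamma (4 - α) * Real.Gamma (5 - α)) := by
    rw [p11, p12, p22, h5, h4]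
    field_simp
    ring
  have hdetpos : 0 < psi α 1 1 * psi α 2 2 - psi α 1 2 ^ 2 := by
    rw [hdet]
    apply div_pos ?_ (mul_pos hg4 hg5)
    have e2 : (0:ℝ) < (1 - α) ^ 2 := pow_pos (by linarith) 2
    have := mul_pos (mul_pos (mul_pos h0 e2) (show (0:ℝ) < 2 - α by linarith))
      (show (0:ℝ) < 6 - α by linarith)
    linarith
  refine ⟨Matrix.posDef_iff_dotProduct_mulVec.mpr ⟨?_, ?_⟩, p22, h22pos, hdet, hdetpos⟩
  · -- Hermitian
    ext i j
    fin_cases i <;> fin_cases j <;>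
      simp [Matrix.conjTranspose_apply, p21]
  · intro x hx
    have hquad : dotProduct (star x)
        (Matrix.mulVec (Matrix.of ![![psi α 2 2, psi α 1 2], ![psi α 2 1, psi α 1 1]]) x)
        = psi α 2 2 * (x 0) ^ 2 + 2 * psi α 1 2 * (x 0 * x 1) + psi α 1 1 * (x 1) ^ 2 := by
      simp [dotProduct, Matrix.mulVec, Fin.sum_univ_two, p21]
      ring
    rw [hquad]
    by_cases h : x 1 = 0
    · have hx0 : x 0 ≠ 0 := by
        intro h0'
        apply hx
        ext i; fin_cases i <;> simp [h, h0']
      rw [h]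
      have : 0 < psi α 2 2 * (x 0) ^ 2 := mul_pos h22pos (by positivity)
      nlinarith
    · nlinarith [sq_nonneg (psi α 2 2 * x 0 + psi α 1 2 * x 1),
        mul_pos hdetpos (mul_self_pos.mpr h), h22pos, sq_nonneg (x 1)]
end

section
/- Let α ∈ (0,1) and n ∈ ℕ*. The symmetric n×n matrix A_n with entries A_n(i,j) = ψ(i,j) for i,j ∈ {1,…,n}, where ψ(i,j) = Γ(i+1)/Γ(i+1−α) + Γ(j+1)/Γ(j+1−α) − Γ(i+j+1)/Γ(i+j+1−α), is positive definite. -/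
open MeasureTheory intervalIntegral Set Finset Matrix Polynomial
open scoped ENNReal

theorem realBeta (α : ℝ) (hα0 : 0 < α) (hα1 : α < 1) (k : ℕ) :
    ∫ x in (0:ℝ)..1, x ^ k * (1 - x) ^ (-α) =
      Real.Gamma (k + 1) * Real.Gamma (1 - α) / Real.Gamma (k + 2 - α) := by
  have h1α : (0:ℝ) < 1 - α := by linarith
  have hB := Complex.Gamma_mul_Gamma_eq_betaIntegral
    (s := ((k:ℝ) + 1 : ℂ)) (t := ((1 - α : ℝ) : ℂ)) (by simp; positivity) (by simpa using h1α)
  have hint : Complex.betaIntegral ((k:ℝ) + 1 : ℂ) ((1 - α : ℝ) : ℂ)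
      = ((∫ x in (0:ℝ)..1, x ^ k * (1 - x) ^ (-α) : ℝ) : ℂ) := by
    rw [Complex.betaIntegral, ← intervalIntegral.integral_ofReal]
    apply intervalIntegral.integral_congr
    intro x hx
    rw [Set.uIcc_of_le (by norm_num : (0:ℝ) ≤ 1)] at hx
    have hx0 : 0 ≤ x := hx.1
    have hx1 : x ≤ 1 := hx.2
    show (x:ℂ) ^ (((k:ℝ) + 1 : ℂ) - 1) * (1 - (x:ℂ)) ^ (((1 - α : ℝ) : ℂ) - 1)
        = ((x ^ k * (1 - x) ^ (-α) : ℝ) : ℂ)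
    have e1 : ((k:ℝ) + 1 : ℂ) - 1 = ((k:ℕ) : ℂ) := by push_cast; ring
    have e2 : ((1 - α : ℝ) : ℂ) - 1 = ((-α : ℝ) : ℂ) := by push_cast; ring
    have e3 : (1 - (x:ℂ)) = ((1 - x : ℝ) : ℂ) := by push_cast; ring
    rw [e1, e2, e3, Complex.cpow_natCast, ← Complex.ofReal_cpow (by linarith) (-α)]
    push_cast
    ring
  rw [hint] at hB
  have hGpos : 0 < Real.Gamma ((k:ℝ) + 2 - α) := Real.Gamma_pos_of_pos (by have hk : (0:ℝ) ≤ k := Nat.cast_nonneg k; linarith)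
  have hcast : (((k:ℝ) + 1 : ℂ)) + ((1 - α : ℝ) : ℂ) = (((k:ℝ) + 2 - α : ℝ) : ℂ) := by
    push_cast; ring
  rw [hcast] at hB
  have h2 : ((k:ℝ)+1:ℂ) = (((k:ℝ)+1 : ℝ) : ℂ) := by push_cast; ring
  rw [h2, Complex.Gamma_ofReal, Complex.Gamma_ofReal, Complex.Gamma_ofReal] at hB
  have := hB
  rw [← Complex.ofReal_mul, ← Complex.ofReal_mul] at this
  have hr : Real.Gamma ((k:ℝ)+1) * Real.Gamma (1-α)
      = Real.Gamma ((k:ℝ)+2-α) * ∫ x in (0:ℝ)..1, x ^ k * (1 - x) ^ (-α) :=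
    Complex.ofReal_injective this
  field_simp
  linarith [hr]


theorem intA (α : ℝ) (hα0 : 0 < α) (hα1 : α < 1) (k : ℕ) :
    IntervalIntegrable (fun x => x ^ k * (1 - x) ^ (-α)) volume (0:ℝ) 1 := by
  have h : IntervalIntegrable (fun x : ℝ => (1 - x) ^ (-α)) volume (0:ℝ) 1 := by
    have := (intervalIntegrable_rpow' (a := 0) (b := 1) (r := -α) (by linarith)).comp_sub_left 1
    simpa using this.symm
  exact h.continuousOn_mul (Continuous.continuousOn (by continuity))

-- telescoping: f m := Γ(m+1)/Γ(m+1-α)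
noncomputable def ff (α : ℝ) (m : ℕ) : ℝ := Real.Gamma (m + 1) / Real.Gamma ((m:ℝ) + 1 - α)

theorem fstep (α : ℝ) (hα0 : 0 < α) (hα1 : α < 1) (k : ℕ) :
    ff α (k+1) - ff α k = α * (Real.Gamma ((k:ℝ)+1) / Real.Gamma ((k:ℝ)+2-α)) := by
  have hk : (0:ℝ) ≤ k := Nat.cast_nonneg k
  have h1 : Real.Gamma ((k:ℝ)+1+1) = ((k:ℝ)+1) * Real.Gamma ((k:ℝ)+1) :=
    Real.Gamma_add_one (by linarith)
  have h2 : Real.Gamma (((k:ℝ)+1-α)+1) = ((k:ℝ)+1-α) * Real.Gamma ((k:ℝ)+1-α) :=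
    Real.Gamma_add_one (by linarith)
  have hp1 : 0 < Real.Gamma ((k:ℝ)+1-α) := Real.Gamma_pos_of_pos (by linarith)
  have hp2 : 0 < Real.Gamma ((k:ℝ)+2-α) := Real.Gamma_pos_of_pos (by linarith)
  have e1 : ((k+1:ℕ):ℝ) + 1 = (k:ℝ)+1+1 := by push_cast; ring
  have e2 : ((k+1:ℕ):ℝ) + 1 - α = ((k:ℝ)+1-α)+1 := by push_cast; ring
  have e3 : (k:ℝ)+2-α = ((k:ℝ)+1-α)+1 := by ring
  have hne : (k:ℝ)+1-α ≠ 0 := by linarith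
  rw [ff, ff, e2, e1, h1, h2, e3, h2]
  field_simp
  ring


theorem tele (α : ℝ) (hα0 : 0 < α) (hα1 : α < 1) (i j : ℕ) :
    ∑ k ∈ Finset.range j, Real.Gamma (((i+k:ℕ):ℝ)+1) / Real.Gamma (((i+k:ℕ):ℝ)+2-α)
      = (ff α (i+j) - ff α i) / α := by
  induction j with
  | zero => simp
  | succ j ih =>
      have hij : i + (j+1) = (i+j)+1 := by ring
      rw [Finset.sum_range_succ, ih, hij]
      have h2 : Real.Gamma (((i+j:ℕ):ℝ)+1) / Real.Gamma (((i+j:ℕ):ℝ)+2-α)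
          = (ff α ((i+j)+1) - ff α (i+j))/α := by
        rw [fstep α hα0 hα1 (i+j), mul_div_cancel_left₀ _ hα0.ne']
      rw [h2]; ring


theorem entry (α : ℝ) (hα0 : 0 < α) (hα1 : α < 1) (i j : ℕ) :
    psi α i j = 1 / Real.Gamma (1-α)
      + (α / Real.Gamma (1-α)) * ∫ x in (0:ℝ)..1,
          (∑ k ∈ Finset.range i, x^k) * (∑ k ∈ Finset.range j, x^k) * (1-x) ^ (1-α) := by
  have hG : 0 < Real.Gamma (1-α) := Real.Gamma_pos_of_pos (by linarith)
  -- step 1: rewrite the integrand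
  have hcong : ∫ x in (0:ℝ)..1,
        (∑ k ∈ Finset.range i, x^k) * (∑ k ∈ Finset.range j, x^k) * (1-x) ^ (1-α)
      = ∫ x in (0:ℝ)..1, ∑ k ∈ Finset.range j,
          (x ^ k * (1-x) ^ (-α) - x ^ (i+k) * (1-x) ^ (-α)) := by
    apply intervalIntegral.integral_congr
    intro x hx
    rw [Set.uIcc_of_le (by norm_num : (0:ℝ) ≤ 1)] at hx
    rcases eq_or_lt_of_le hx.2 with h1 | h1
    · subst h1
      simp [Real.zero_rpow (by linarith : (1:ℝ)-α ≠ 0)]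
    · have hpos : 0 < 1 - x := by linarith
      have hw : (1-x) ^ (1-α) = (1-x) * (1-x) ^ (-α) := by
        rw [show (1:ℝ)-α = 1 + (-α) by ring, Real.rpow_add hpos, Real.rpow_one]
      have hgi : (∑ k ∈ Finset.range i, x^k) * (1-x) = 1 - x^i := by
        have := geom_sum_mul x i
        nlinarith [this]
      show (∑ k ∈ Finset.range i, x^k) * (∑ k ∈ Finset.range j, x^k) * (1-x) ^ (1-α)
          = ∑ k ∈ Finset.range j, (x ^ k * (1-x) ^ (-α) - x ^ (i+k) * (1-x) ^ (-α))
      rw [hw]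
      have e4 : (∑ k ∈ Finset.range j, (x ^ k * (1-x) ^ (-α) - x ^ (i+k) * (1-x) ^ (-α)))
          = ∑ k ∈ Finset.range j, (1-x^i) * x^k * (1-x) ^ (-α) := by
        apply Finset.sum_congr rfl
        intro k _
        rw [pow_add]
        ring
      rw [e4, ← Finset.sum_mul, ← Finset.mul_sum, ← hgi]
      ring
  rw [hcong, intervalIntegral.integral_finset_sum (fun k _ => (intA α hα0 hα1 k).sub (intA α hα0 hα1 (i+k)))]
  have hterm : ∀ k ∈ Finset.range j, (∫ x in (0:ℝ)..1,
        (x ^ k * (1-x) ^ (-α) - x ^ (i+k) * (1-x) ^ (-α)))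
      = Real.Gamma (1-α) * (Real.Gamma ((k:ℝ) + 1) / Real.Gamma ((k:ℝ) + 2 - α))
        - Real.Gamma (1-α) * (Real.Gamma (((i+k:ℕ):ℝ) + 1) / Real.Gamma (((i+k:ℕ):ℝ) + 2 - α)) := by
    intro k _
    rw [intervalIntegral.integral_sub (intA α hα0 hα1 k) (intA α hα0 hα1 (i+k)),
      realBeta α hα0 hα1 k, realBeta α hα0 hα1 (i+k)]
    ring
  rw [Finset.sum_congr rfl hterm, Finset.sum_sub_distrib, ← Finset.mul_sum, ← Finset.mul_sum]
  have t0 : ∑ k ∈ Finset.range j, Real.Gamma ((k:ℝ) + 1) / Real.Gamma ((k:ℝ) + 2 - α)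
      = (ff α j - ff α 0) / α := by
    have := tele α hα0 hα1 0 j
    simpa using this
  rw [t0, tele α hα0 hα1 i j]
  have hff0 : ff α 0 = 1 / Real.Gamma (1-α) := by
    simp [ff, Real.Gamma_one]
  have hpsi : psi α i j = ff α i + ff α j - ff α (i+j) := by
    simp only [psi, ff]
    push_cast
    ring_nf
  rw [hpsi, hff0]
  field_simp
  ring


theorem qf (α : ℝ) (hα0 : 0 < α) (hα1 : α < 1) (n : ℕ) (v : Fin n → ℝ) :
    v ⬝ᵥ ((Matrix.of fun i j : Fin n => psi α ((i : ℕ) + 1) ((j : ℕ) + 1)) *ᵥ v)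
      = (1 / Real.Gamma (1-α)) * (∑ i, v i)^2
        + (α / Real.Gamma (1-α)) * ∫ x in (0:ℝ)..1,
            (∑ i, v i * ∑ k ∈ Finset.range ((i:ℕ)+1), x^k)^2 * (1-x) ^ (1-α) := by
  have contw : Continuous fun x : ℝ => (1-x) ^ (1-α) := by
    rw [continuous_iff_continuousAt]
    intro x
    exact (Real.continuousAt_rpow_const _ _ (Or.inr (by linarith))).comp
      ((continuous_const.sub continuous_id).continuousAt)
  have contg : ∀ m : ℕ, Continuous fun x : ℝ => ∑ k ∈ Finset.range m, x^k := by
    intro m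
    exact continuous_finset_sum _ (fun k _ => continuous_pow k)
  set c := 1 / Real.Gamma (1-α) with hc
  set K := α / Real.Gamma (1-α) with hK
  set w := fun x : ℝ => (1-x) ^ (1-α) with hw
  set g := fun (m : ℕ) (x : ℝ) => ∑ k ∈ Finset.range m, x^k with hg
  have contF : ∀ i j : Fin n, Continuous fun x => (v i * g ((i:ℕ)+1) x) * (v j * g ((j:ℕ)+1) x) * w x :=
    fun i j => (((continuous_const.mul (contg _)).mul
      ((continuous_const.mul (contg _)))).mul contw)
  have entry' : ∀ i j : Fin n, psi α ((i:ℕ)+1) ((j:ℕ)+1)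
      = c + K * ∫ x in (0:ℝ)..1, g ((i:ℕ)+1) x * g ((j:ℕ)+1) x * w x :=
    fun i j => entry α hα0 hα1 _ _
  have step1 : v ⬝ᵥ ((Matrix.of fun i j : Fin n => psi α ((i : ℕ) + 1) ((j : ℕ) + 1)) *ᵥ v)
      = ∑ i, ∑ j, (c * (v i * v j)
          + K * ∫ x in (0:ℝ)..1, (v i * g ((i:ℕ)+1) x) * (v j * g ((j:ℕ)+1) x) * w x) := by
    simp only [dotProduct, Matrix.mulVec, Matrix.of_apply, Finset.mul_sum]
    apply Finset.sum_congr rfl; intro i _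
    apply Finset.sum_congr rfl; intro j _
    rw [entry' i j]
    have hI : v i * v j * (∫ x in (0:ℝ)..1, g ((i:ℕ)+1) x * g ((j:ℕ)+1) x * w x)
        = ∫ x in (0:ℝ)..1, (v i * g ((i:ℕ)+1) x) * (v j * g ((j:ℕ)+1) x) * w x := by
      rw [← intervalIntegral.integral_const_mul]
      congr 1; funext x; ring
    rw [← hI]; ring
  rw [step1]
  rw [Finset.sum_congr rfl (fun i _ => Finset.sum_add_distrib), Finset.sum_add_distrib]
  congr 1
  · simp_rw [← Finset.mul_sum]
    congr 1
    rw [sq, ← Finset.sum_mul]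
  · simp_rw [← Finset.mul_sum]
    congr 1
    have h1 : ∀ i : Fin n, (∑ j, ∫ x in (0:ℝ)..1, (v i * g ((i:ℕ)+1) x) * (v j * g ((j:ℕ)+1) x) * w x)
        = ∫ x in (0:ℝ)..1, ∑ j, (v i * g ((i:ℕ)+1) x) * (v j * g ((j:ℕ)+1) x) * w x :=
      fun i => (intervalIntegral.integral_finset_sum (fun j _ => (contF i j).intervalIntegrable _ _)).symm
    rw [Finset.sum_congr rfl (fun i _ => h1 i)]
    rw [← intervalIntegral.integral_finset_sum (fun i (_ : i ∈ Finset.univ) =>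
        ((continuous_finset_sum Finset.univ (fun j _ => contF i j)).intervalIntegrable (0:ℝ) 1))]
    congr 1; funext x
    rw [sq, Finset.sum_mul_sum Finset.univ Finset.univ
      (fun i => v i * g ((i:ℕ)+1) x) (fun j => v j * g ((j:ℕ)+1) x), Finset.sum_mul]
    apply Finset.sum_congr rfl; intro i _
    rw [Finset.sum_mul]


theorem pos_int (α : ℝ) (hα0 : 0 < α) (hα1 : α < 1) (n : ℕ) (v : Fin n → ℝ) (hv : v ≠ 0) :
    0 < ∫ x in (0:ℝ)..1,
        (∑ i, v i * ∑ k ∈ Finset.range ((i:ℕ)+1), x^k)^2 * (1-x) ^ (1-α) := by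
  classical
  set p : Polynomial ℝ := ∑ i : Fin n, Polynomial.C (v i) * (∑ k ∈ Finset.range ((i:ℕ)+1), Polynomial.X ^ k) with hp
  have evalp : ∀ x : ℝ, p.eval x = ∑ i, v i * ∑ k ∈ Finset.range ((i:ℕ)+1), x^k := by
    intro x
    rw [hp, Polynomial.eval_finset_sum]
    apply Finset.sum_congr rfl
    intro i _
    rw [Polynomial.eval_mul, Polynomial.eval_C, Polynomial.eval_finset_sum]
    simp
  have coeffp : ∀ m : ℕ, p.coeff m = ∑ i : Fin n, if m ≤ (i:ℕ) then v i else 0 := by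
    intro m
    rw [hp, Polynomial.finset_sum_coeff]
    apply Finset.sum_congr rfl
    intro i _
    rw [Polynomial.coeff_C_mul, Polynomial.finset_sum_coeff]
    have : ∀ k ∈ Finset.range ((i:ℕ)+1), (Polynomial.X ^ k : Polynomial ℝ).coeff m
        = if m = k then 1 else 0 := fun k _ => Polynomial.coeff_X_pow k m
    rw [Finset.sum_congr rfl this, Finset.sum_ite_eq (Finset.range ((i:ℕ)+1)) m (fun _ => (1:ℝ))]
    by_cases h : m ≤ (i:ℕ)
    · simp [Finset.mem_range, Nat.lt_succ_of_le h, h]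
    · have : ¬ (m < (i:ℕ)+1) := by omega
      simp [Finset.mem_range, this, h]
  have pne : p ≠ 0 := by
    intro h0
    apply hv
    funext i
    have key : v i = p.coeff (i:ℕ) - p.coeff ((i:ℕ)+1) := by
      rw [coeffp, coeffp, ← Finset.sum_sub_distrib]
      rw [Finset.sum_eq_single i]
      · simp
      · intro b _ hb
        have hbv : (b:ℕ) ≠ (i:ℕ) := fun h => hb (Fin.ext h)
        by_cases h : (i:ℕ) ≤ (b:ℕ)
        · have h' : (i:ℕ)+1 ≤ (b:ℕ) := by omega
          simp [h, h']
        · have h' : ¬((i:ℕ)+1 ≤ (b:ℕ)) := by omega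
          simp [h, h']
      · intro h; exact absurd (Finset.mem_univ i) h
    rw [key, h0]
    simp
  have hroots : {x : ℝ | p.IsRoot x}.Finite := p.finite_setOf_isRoot pne
  set f : ℝ → ℝ := fun x => (p.eval x)^2 * (1-x) ^ (1-α) with hf
  have hcongr : (∫ x in (0:ℝ)..1,
      (∑ i, v i * ∑ k ∈ Finset.range ((i:ℕ)+1), x^k)^2 * (1-x) ^ (1-α)) = ∫ x in (0:ℝ)..1, f x := by
    congr 1; funext x; simp only [hf]; rw [← evalp x]
  rw [hcongr, intervalIntegral.integral_of_le (by norm_num : (0:ℝ) ≤ 1)]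
  have contw : Continuous fun x : ℝ => (1-x) ^ (1-α) := by
    rw [continuous_iff_continuousAt]
    intro x
    exact (Real.continuousAt_rpow_const _ _ (Or.inr (by linarith))).comp
      ((continuous_const.sub continuous_id).continuousAt)
  have contf : Continuous f := ((p.continuous_aeval.pow 2).mul contw)
  rw [MeasureTheory.setIntegral_pos_iff_support_of_nonneg_ae]
  · -- 0 < volume (support f ∩ Ioc 0 1)
    have hsub : Ioo (0:ℝ) 1 \ {x | p.IsRoot x} ⊆ Function.support f ∩ Ioc 0 1 := by
      rintro x ⟨hx, hxr⟩
      refine ⟨?_, hx.1, le_of_lt hx.2⟩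
      have h1 : (0:ℝ) < 1 - x := by linarith [hx.2]
      have h2 : 0 < (1-x) ^ (1-α) := Real.rpow_pos_of_pos h1 _
      have h3 : p.eval x ≠ 0 := hxr
      simp only [hf, Function.mem_support]
      positivity
    have h4 : volume (Ioo (0:ℝ) 1 \ {x | p.IsRoot x}) = 1 := by
      rw [measure_diff_null (hroots.measure_zero _)]
      simp
    calc (0:ℝ≥0∞) < 1 := by norm_num
      _ = volume (Ioo (0:ℝ) 1 \ {x | p.IsRoot x}) := h4.symm
      _ ≤ volume (Function.support f ∩ Ioc 0 1) := measure_mono hsub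
  · -- nonneg ae
    rw [Filter.EventuallyLE, ae_restrict_iff' measurableSet_Ioc]
    apply ae_of_all
    intro x hx
    have h1 : (0:ℝ) ≤ 1 - x := by linarith [hx.2]
    have h2 : 0 ≤ (1-x) ^ (1-α) := Real.rpow_nonneg h1 _
    simp only [hf, Pi.zero_apply]
    positivity
  · exact contf.integrableOn_Ioc


/-- The n×n matrix with entries ψ(i,j), i,j ∈ {1,…,n}, is positive definite. -/
theorem psi_matrix_posDef (α : ℝ) (hα : α ∈ Set.Ioo (0:ℝ) 1) (n : ℕ) (hn : 1 ≤ n) :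
    (Matrix.of fun i j : Fin n => psi α ((i : ℕ) + 1) ((j : ℕ) + 1)).PosDef := by
  obtain ⟨hα0, hα1⟩ := hα
  rw [Matrix.posDef_iff_dotProduct_mulVec]
  constructor
  · -- Hermitian
    ext i j
    simp only [Matrix.conjTranspose_apply, Matrix.of_apply, star_trivial, psi]
    push_cast
    ring
  · intro v hv
    have hstar : star v = v := by
      funext i; simp
    rw [hstar, qf α hα0 hα1 n v]
    have hG : 0 < Real.Gamma (1-α) := Real.Gamma_pos_of_pos (by linarith)
    have h1 : 0 ≤ (1 / Real.Gamma (1-α)) * (∑ i, v i)^2 := by positivity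
    have h2 : 0 < (α / Real.Gamma (1-α)) * ∫ x in (0:ℝ)..1,
        (∑ i, v i * ∑ k ∈ Finset.range ((i:ℕ)+1), x^k)^2 * (1-x) ^ (1-α) :=
      mul_pos (by positivity) (pos_int α hα0 hα1 n v hv)
    linarith
end

section
/- Let α ∈ (0,1), t₀ ∈ ℝ, and let P be a real polynomial. Then for every t > t₀: cD^α_{t₀,t}[P(t)²] ≤ 2 [cD^α_{t₀,t} P(t)] · P(t), where cD^α_{t₀,t} denotes the Caputo fractional derivative of order α at t₀. -/
/-- The Riemann–Liouville fractional derivative of order α at t₀. -/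
noncomputable def riemannLiouvilleDeriv (α t₀ : ℝ) (f : ℝ → ℝ) (t : ℝ) : ℝ :=
  deriv (fun τ => (Real.Gamma (1 - α))⁻¹ * ∫ s in t₀..τ, (τ - s) ^ (-α) * f s) t

/-- The Caputo fractional derivative of order α at t₀. -/
noncomputable def caputoDeriv (α t₀ : ℝ) (f : ℝ → ℝ) (t : ℝ) : ℝ :=
  riemannLiouvilleDeriv α t₀ (fun s => f s - f t₀) t

open MeasureTheory intervalIntegral Polynomial Set


noncomputable def cInt (α : ℝ) (k : ℕ) : ℝ := ∫ v in (0:ℝ)..1, (1 - v) ^ (-α) * v ^ k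

lemma intable_poly (hα : α ∈ Set.Ioo (0:ℝ) 1) (p : Polynomial ℝ) :
    IntervalIntegrable (fun v => (1 - v) ^ (-α) * p.eval v) volume 0 1 := by
  have h1 : IntervalIntegrable (fun x : ℝ => x ^ (-α)) volume 0 1 :=
    intervalIntegrable_rpow' (by linarith [hα.2])
  have h2 := (h1.comp_sub_left 1)
  simp only [sub_zero, sub_self] at h2
  exact (h2.symm).mul_continuousOn (p.continuous_aeval).continuousOn |>.symm |>.symm

lemma intable_poly2 (hα : α ∈ Set.Ioo (0:ℝ) 1) (t₀ τ : ℝ) (p : Polynomial ℝ) :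
    IntervalIntegrable (fun s => (τ - s) ^ (-α) * p.eval s) volume t₀ τ := by
  have h1 : IntervalIntegrable (fun x : ℝ => x ^ (-α)) volume (τ - t₀) (τ - τ) :=
    intervalIntegrable_rpow' (by linarith [hα.2])
  have h2 := h1.comp_sub_left τ
  simp only [sub_sub_cancel] at h2
  exact h2.mul_continuousOn (p.continuous_aeval).continuousOn

lemma cInt_rec (hα : α ∈ Set.Ioo (0:ℝ) 1) (k : ℕ) :
    ((k:ℝ) + 2 - α) * cInt α (k+1) = ((k:ℝ) + 1) * cInt α k := by
  obtain ⟨h0, h1⟩ := id hα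
  set F : ℝ → ℝ := fun v => (1 - v) ^ (1 - α) * v ^ (k+1) with hF
  set f : ℝ → ℝ := fun v => -(1 - α) * (1 - v) ^ (-α) * v ^ (k+1)
      + (1 - v) ^ (1 - α) * (((k:ℝ)+1) * v ^ k) with hf
  have hder : ∀ x ∈ Ioo (0:ℝ) 1, HasDerivWithinAt F (f x) (Ioi x) x := by
    intro x hx
    have hx1 : (1:ℝ) - x ≠ 0 := by simp only [ne_eq]; intro h; have := hx.2; nlinarith [hx.2]
    have hr : HasDerivAt (fun v : ℝ => (1 - v) ^ (1 - α)) (-( (1-α) * (1-x) ^ (1-α-1))) x := by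
      have h := (Real.hasDerivAt_rpow_const (x := 1 - x) (p := 1 - α) (Or.inl hx1))
      have hid : HasDerivAt (fun v : ℝ => 1 - v) (-1) x := by
        simpa using (hasDerivAt_id x).const_sub 1
      simpa [mul_comm, Function.comp_def] using h.comp x hid
    have hp : HasDerivAt (fun v : ℝ => v ^ (k+1)) (((k:ℝ)+1) * x ^ k) x := by
      simpa using hasDerivAt_pow (k+1) x
    have := hr.mul hp
    have hexp : (1:ℝ) - α - 1 = -α := by ring
    refine HasDerivAt.hasDerivWithinAt ?_
    rw [hf]
    refine this.congr_deriv ?_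
    rw [hexp]; ring
  have hcont : ContinuousOn F (Icc 0 1) := by
    apply ContinuousOn.mul
    · apply Continuous.continuousOn
      exact (continuous_const.sub continuous_id).rpow_const (fun x => Or.inr (by linarith))
    · exact (continuous_pow (k+1)).continuousOn
  have hint1 : IntervalIntegrable (fun v => -(1 - α) * (1 - v) ^ (-α) * v ^ (k+1)) volume 0 1 := by
    have h := intable_poly hα (C (-(1-α)) * X ^ (k+1))
    simp only [eval_mul, eval_C, eval_pow, eval_X] at h
    refine (iff_of_eq (congrArg₂ (fun f g => IntervalIntegrable f volume 0 g) ?_ rfl)).mpr h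
    funext v; ring
  have hint2 : IntervalIntegrable (fun v => (1 - v) ^ (1 - α) * (((k:ℝ)+1) * v ^ k)) volume 0 1 := by
    apply Continuous.intervalIntegrable
    exact ((continuous_const.sub continuous_id).rpow_const
      (fun x => Or.inr (by linarith))).mul (continuous_const.mul (continuous_pow k))
  have hftc : ∫ v in (0:ℝ)..1, f v = F 1 - F 0 :=
    integral_eq_sub_of_hasDeriv_right_of_le zero_le_one hcont hder (hint1.add hint2)
  have hF1 : F 1 = 0 := by simp [hF, Real.zero_rpow (by linarith : (1:ℝ) - α ≠ 0)]
  have hF0 : F 0 = 0 := by simp [hF]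
  -- split the integral
  have hsplit : ∫ v in (0:ℝ)..1, f v
      = -(1-α) * (∫ v in (0:ℝ)..1, (1 - v) ^ (-α) * v ^ (k+1))
        + ((k:ℝ)+1) * ∫ v in (0:ℝ)..1, (1 - v) ^ (1-α) * v ^ k := by
    rw [hf, integral_add hint1 hint2]
    rw [← intervalIntegral.integral_const_mul, ← intervalIntegral.integral_const_mul]
    congr 1
    · congr 1; funext v; ring
    · congr 1; funext v; ring
  -- (1-v)^(1-α) v^k = (1-v)^(-α) v^k - (1-v)^(-α) v^(k+1) on [0,1]
  have hkey : ∫ v in (0:ℝ)..1, (1 - v) ^ (1-α) * v ^ k = cInt α k - cInt α (k+1) := by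
    have ha := intable_poly hα (X ^ k)
    have hb := intable_poly hα (X ^ (k+1))
    simp only [eval_pow, eval_X] at ha hb
    rw [cInt, cInt, ← integral_sub ha hb]
    apply integral_congr
    intro v hv
    rw [uIcc_of_le zero_le_one] at hv
    rcases eq_or_lt_of_le hv.2 with h | h
    · subst h
      simp [Real.zero_rpow (by linarith : (1:ℝ) - α ≠ 0),
        Real.zero_rpow (by linarith : -α ≠ 0)]
    · have h1v : (0:ℝ) < 1 - v := by linarith
      have : (1 - v) ^ (1 - α) = (1 - v) ^ (-α) * (1 - v) := by
        rw [show (1:ℝ) - α = -α + 1 by ring, Real.rpow_add h1v, Real.rpow_one]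
      show (1 - v) ^ (1 - α) * v ^ k
        = (1 - v) ^ (-α) * v ^ k - (1 - v) ^ (-α) * v ^ (k + 1)
      rw [this]; ring
  have : -(1-α) * cInt α (k+1) + ((k:ℝ)+1) * (cInt α k - cInt α (k+1)) = 0 := by
    have hcInt : cInt α (k+1) = ∫ v in (0:ℝ)..1, (1 - v) ^ (-α) * v ^ (k+1) := rfl
    rw [← hkey, hcInt, ← hsplit, hftc, hF1, hF0, sub_zero]
  linarith

lemma subst_formula (hα : α ∈ Set.Ioo (0:ℝ) 1) {t₀ τ : ℝ} (h : t₀ < τ) (k : ℕ) :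
    (∫ s in t₀..τ, (τ - s) ^ (-α) * (s - t₀) ^ k)
      = cInt α k * (τ - t₀) ^ ((k:ℝ) + 1 - α) := by
  have hT0 : 0 < τ - t₀ := by linarith
  have hsub := intervalIntegral.integral_comp_mul_add (a := (0:ℝ)) (b := 1)
    (f := fun u => (τ - u) ^ (-α) * (u - t₀) ^ k) (ne_of_gt hT0) t₀
  simp only [mul_zero, zero_add, mul_one, sub_add_cancel, smul_eq_mul] at hsub
  have hre : (∫ v in (0:ℝ)..1, (τ - ((τ - t₀) * v + t₀)) ^ (-α) * ((τ - t₀) * v + t₀ - t₀) ^ k)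
      = (τ - t₀) ^ (-α) * (τ - t₀) ^ (k:ℕ) * cInt α k := by
    rw [cInt, ← intervalIntegral.integral_const_mul]
    apply integral_congr
    intro v hv
    rw [uIcc_of_le zero_le_one] at hv
    have h1v : (0:ℝ) ≤ 1 - v := by linarith [hv.2]
    have e1 : τ - ((τ - t₀) * v + t₀) = (τ - t₀) * (1 - v) := by ring
    have e2 : (τ - t₀) * v + t₀ - t₀ = (τ - t₀) * v := by ring
    show (τ - ((τ - t₀) * v + t₀)) ^ (-α) * ((τ - t₀) * v + t₀ - t₀) ^ k
      = (τ - t₀) ^ (-α) * (τ - t₀) ^ k * ((1 - v) ^ (-α) * v ^ k)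
    rw [e1, e2, Real.mul_rpow (le_of_lt hT0) h1v, mul_pow]
    ring
  rw [hre] at hsub
  have : (∫ s in t₀..τ, (τ - s) ^ (-α) * (s - t₀) ^ k)
      = (τ - t₀) * ((τ - t₀) ^ (-α) * (τ - t₀) ^ (k:ℕ) * cInt α k) := by
    rw [hsub]; field_simp
  rw [this, show ((k:ℝ) + 1 - α) = (k:ℝ) + 1 + -α by ring,
    Real.rpow_add hT0, Real.rpow_add hT0, Real.rpow_one, Real.rpow_natCast]
  ring

lemma closed_form (hα : α ∈ Set.Ioo (0:ℝ) 1) {t₀ τ : ℝ} (h : t₀ < τ) (R : Polynomial ℝ)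
    {n : ℕ} (hn : R.natDegree ≤ n) :
    (∫ s in t₀..τ, (τ - s) ^ (-α) * R.eval s)
      = ∑ k ∈ Finset.range (n+1),
          (R.comp (X + C t₀)).coeff k * (cInt α k * (τ - t₀) ^ ((k:ℝ) + 1 - α)) := by
  have hdeg : (R.comp (X + C t₀)).natDegree < n + 1 := by
    calc (R.comp (X + C t₀)).natDegree ≤ R.natDegree * (X + C t₀).natDegree := natDegree_comp_le
    _ = R.natDegree := by rw [natDegree_X_add_C, mul_one]
    _ < n+1 := Nat.lt_succ_of_le hn
  have heval : ∀ s : ℝ, R.eval s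
      = ∑ k ∈ Finset.range (n+1), (R.comp (X + C t₀)).coeff k * (s - t₀) ^ k := by
    intro s
    have h2 := eval_eq_sum_range' hdeg (s - t₀)
    rw [eval_comp, eval_add, eval_X, eval_C, sub_add_cancel] at h2
    exact h2
  have hint : ∀ k ∈ Finset.range (n+1), IntervalIntegrable
      (fun s => (τ - s) ^ (-α) * ((R.comp (X + C t₀)).coeff k * (s - t₀) ^ k))
      volume t₀ τ := by
    intro k _
    have := intable_poly2 hα t₀ τ (C ((R.comp (X + C t₀)).coeff k) * (X - C t₀) ^ k)
    simpa using this
  calc (∫ s in t₀..τ, (τ - s) ^ (-α) * R.eval s)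
      = ∫ s in t₀..τ, ∑ k ∈ Finset.range (n+1),
          (τ - s) ^ (-α) * ((R.comp (X + C t₀)).coeff k * (s - t₀) ^ k) := by
        apply integral_congr; intro s _
        show (τ - s) ^ (-α) * R.eval s = _
        rw [heval s, Finset.mul_sum]
    _ = ∑ k ∈ Finset.range (n+1), ∫ s in t₀..τ,
          (τ - s) ^ (-α) * ((R.comp (X + C t₀)).coeff k * (s - t₀) ^ k) :=
        intervalIntegral.integral_finset_sum hint
    _ = ∑ k ∈ Finset.range (n+1),
          (R.comp (X + C t₀)).coeff k * (cInt α k * (τ - t₀) ^ ((k:ℝ) + 1 - α)) := by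
        apply Finset.sum_congr rfl; intro k _
        rw [← subst_formula hα h k, ← intervalIntegral.integral_const_mul]
        apply integral_congr; intro s _; ring

lemma caputo_value (hα : α ∈ Set.Ioo (0:ℝ) 1) {t₀ t : ℝ} (ht : t₀ < t) (f : ℝ → ℝ)
    (R : Polynomial ℝ) (hfR : ∀ s, f s - f t₀ = R.eval s) {n : ℕ} (hn : R.natDegree ≤ n) :
    caputoDeriv α t₀ f t = (Real.Gamma (1-α))⁻¹ *
      ∑ k ∈ Finset.range (n+1), (R.comp (X + C t₀)).coeff k *
        (cInt α k * (((k:ℝ) + 1 - α) * (t - t₀) ^ ((k:ℝ) - α))) := by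
  have hS : HasDerivAt (fun τ => (Real.Gamma (1-α))⁻¹ *
      ∑ k ∈ Finset.range (n+1), (R.comp (X + C t₀)).coeff k *
        (cInt α k * (τ - t₀) ^ ((k:ℝ) + 1 - α)))
      ((Real.Gamma (1-α))⁻¹ *
      ∑ k ∈ Finset.range (n+1), (R.comp (X + C t₀)).coeff k *
        (cInt α k * (((k:ℝ) + 1 - α) * (t - t₀) ^ ((k:ℝ) - α)))) t := by
    apply HasDerivAt.const_mul
    apply HasDerivAt.fun_sum
    intro k _
    apply HasDerivAt.const_mul
    apply HasDerivAt.const_mul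
    have hT : t - t₀ ≠ 0 := ne_of_gt (by linarith)
    have h := Real.hasDerivAt_rpow_const (x := t - t₀) (p := (k:ℝ)+1-α) (Or.inl hT)
    have hid : HasDerivAt (fun τ : ℝ => τ - t₀) 1 t := (hasDerivAt_id t).sub_const t₀
    have h3 := h.comp t hid
    simpa [show (k:ℝ)+1-α-1 = (k:ℝ)-α by ring, mul_comm, Function.comp_def] using h3
  have hEq : (fun τ => (Real.Gamma (1-α))⁻¹ * ∫ s in t₀..τ, (τ - s) ^ (-α) * (f s - f t₀))
      =ᶠ[nhds t] (fun τ => (Real.Gamma (1-α))⁻¹ *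
      ∑ k ∈ Finset.range (n+1), (R.comp (X + C t₀)).coeff k *
        (cInt α k * (τ - t₀) ^ ((k:ℝ) + 1 - α))) := by
    filter_upwards [Ioi_mem_nhds ht] with τ hτ
    have : (fun s => (τ - s) ^ (-α) * (f s - f t₀)) = fun s => (τ - s) ^ (-α) * R.eval s := by
      funext s; rw [hfR]
    rw [this, closed_form hα hτ R hn]
  rw [caputoDeriv, riemannLiouvilleDeriv]
  exact (hS.congr_of_eventuallyEq hEq).deriv

lemma key_nonpos (hα : α ∈ Set.Ioo (0:ℝ) 1) (ψ : Polynomial ℝ) (hroot : ψ.eval 1 = 0)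
    (hpos : ∀ v ∈ Icc (0:ℝ) 1, 0 ≤ ψ.eval v) :
    (∫ v in (0:ℝ)..1, (1 - v) ^ (-α) * ψ.derivative.eval v) ≤ 0 := by
  obtain ⟨h0, h1⟩ := id hα
  obtain ⟨ρ₀, hfac⟩ := (dvd_iff_isRoot.mpr hroot : (X - C 1) ∣ ψ)
  set ρ : Polynomial ℝ := -ρ₀ with hρ
  have hψv : ∀ v : ℝ, ψ.eval v = (1 - v) * ρ.eval v := by
    intro v; rw [hfac]; simp [hρ]; ring
  have hψ'v : ∀ v : ℝ, ψ.derivative.eval v = -(ρ.eval v) + (1 - v) * ρ.derivative.eval v := by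
    intro v
    rw [hfac, derivative_mul]
    simp [hρ]; ring
  have hρpos : ∀ v ∈ Ico (0:ℝ) 1, 0 ≤ ρ.eval v := by
    intro v hv
    have h2 := hpos v ⟨hv.1, le_of_lt hv.2⟩
    rw [hψv v] at h2
    have h3 : (0:ℝ) < 1 - v := by linarith [hv.2]
    nlinarith
  set G : ℝ → ℝ := fun v => (1 - v) ^ (1 - α) * ρ.eval v with hG
  set g : ℝ → ℝ := fun v => -(1 - α) * (1 - v) ^ (-α) * ρ.eval v
      + (1 - v) ^ (1 - α) * ρ.derivative.eval v with hg
  have hcont : ContinuousOn G (Icc 0 1) := by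
    apply ContinuousOn.mul
    · exact ((continuous_const.sub continuous_id).rpow_const
        (fun x => Or.inr (by linarith))).continuousOn
    · exact ρ.continuous_aeval.continuousOn
  have hder : ∀ x ∈ Ioo (0:ℝ) 1, HasDerivWithinAt G (g x) (Ioi x) x := by
    intro x hx
    have hx1 : (1:ℝ) - x ≠ 0 := ne_of_gt (by linarith [hx.2])
    have hr : HasDerivAt (fun v : ℝ => (1 - v) ^ (1 - α)) (-((1-α) * (1-x) ^ (1-α-1))) x := by
      have h := (Real.hasDerivAt_rpow_const (x := 1 - x) (p := 1 - α) (Or.inl hx1))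
      have hid : HasDerivAt (fun v : ℝ => 1 - v) (-1) x := by
        simpa using (hasDerivAt_id x).const_sub 1
      simpa [mul_comm, Function.comp_def] using h.comp x hid
    have hp : HasDerivAt (fun v : ℝ => ρ.eval v) (ρ.derivative.eval x) x := ρ.hasDerivAt x
    refine HasDerivAt.hasDerivWithinAt ?_
    have h4 := hr.mul hp
    rw [hg]
    refine h4.congr_deriv ?_
    rw [show (1:ℝ) - α - 1 = -α by ring]
    ring
  have hint1 : IntervalIntegrable (fun v => -(1 - α) * (1 - v) ^ (-α) * ρ.eval v) volume 0 1 := by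
    have h := intable_poly hα (C (-(1-α)) * ρ)
    simp only [eval_mul, eval_C] at h
    refine (iff_of_eq (congrArg₂ (fun f g => IntervalIntegrable f volume 0 g) ?_ rfl)).mpr h
    funext v; ring
  have hint2 : IntervalIntegrable (fun v => (1 - v) ^ (1 - α) * ρ.derivative.eval v) volume 0 1 := by
    apply Continuous.intervalIntegrable
    exact ((continuous_const.sub continuous_id).rpow_const
      (fun x => Or.inr (by linarith))).mul ρ.derivative.continuous_aeval
  have hftc : ∫ v in (0:ℝ)..1, g v = G 1 - G 0 :=
    integral_eq_sub_of_hasDeriv_right_of_le zero_le_one hcont hder (hint1.add hint2)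
  have hG1 : G 1 = 0 := by simp [hG, Real.zero_rpow (by linarith : (1:ℝ) - α ≠ 0)]
  have hG0 : G 0 = ρ.eval 0 := by simp [hG]
  have hintρ : IntervalIntegrable (fun v => (1 - v) ^ (-α) * ρ.eval v) volume 0 1 :=
    intable_poly hα ρ
  -- pointwise identity on [0,1]
  have hpt : ∀ v ∈ uIcc (0:ℝ) 1, (1 - v) ^ (-α) * ψ.derivative.eval v
      = g v + (-α) * ((1 - v) ^ (-α) * ρ.eval v) := by
    intro v hv
    rw [uIcc_of_le zero_le_one] at hv
    rcases eq_or_lt_of_le hv.2 with h | h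
    · subst h
      simp [hg, Real.zero_rpow (by linarith : (1:ℝ) - α ≠ 0),
        Real.zero_rpow (by linarith : -α ≠ 0)]
    · have h1v : (0:ℝ) < 1 - v := by linarith
      have e : (1 - v) ^ (1 - α) = (1 - v) ^ (-α) * (1 - v) := by
        rw [show (1:ℝ) - α = -α + 1 by ring, Real.rpow_add h1v, Real.rpow_one]
      rw [hψ'v v, hg]
      simp only
      rw [e]; ring
  have hsplit : (∫ v in (0:ℝ)..1, (1 - v) ^ (-α) * ψ.derivative.eval v)
      = (∫ v in (0:ℝ)..1, g v) + (-α) * ∫ v in (0:ℝ)..1, (1 - v) ^ (-α) * ρ.eval v := by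
    rw [← intervalIntegral.integral_const_mul, ← integral_add (hint1.add hint2) (hintρ.const_mul _)]
    exact integral_congr hpt
  have hI : 0 ≤ ∫ v in (0:ℝ)..1, (1 - v) ^ (-α) * ρ.eval v := by
    apply intervalIntegral.integral_nonneg zero_le_one
    intro u hu
    rcases eq_or_lt_of_le hu.2 with h | h
    · subst h; simp [Real.zero_rpow (by linarith : -α ≠ 0)]
    · exact mul_nonneg (Real.rpow_nonneg (by linarith) _) (hρpos u ⟨hu.1, h⟩)
  have hρ0 : 0 ≤ ρ.eval 0 := hρpos 0 ⟨le_refl _, zero_lt_one⟩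
  rw [hsplit, hftc, hG1, hG0]
  nlinarith

lemma sum_nonpos (hα : α ∈ Set.Ioo (0:ℝ) 1) {t₀ t : ℝ} (ht : t₀ < t) (Q : Polynomial ℝ)
    (hQt : Q.eval t = 0) (hQpos : ∀ s, 0 ≤ Q.eval s) {n : ℕ} (hn : Q.natDegree < n) :
    ∑ k ∈ Finset.range (n+1), ((Q - C (Q.eval t₀)).comp (X + C t₀)).coeff k *
      (cInt α k * (((k:ℝ) + 1 - α) * (t - t₀) ^ ((k:ℝ) - α))) ≤ 0 := by
  obtain ⟨h0, h1⟩ := id hα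
  have hT0 : 0 < t - t₀ := by linarith
  set T : ℝ := t - t₀ with hT
  set W : Polynomial ℝ := Q.comp (X + C t₀) with hW
  set Wd : Polynomial ℝ := W.derivative with hWd
  have hW' : (Q - C (Q.eval t₀)).comp (X + C t₀) = W - C (Q.eval t₀) := by
    rw [sub_comp, C_comp]
  have hWdeg : W.natDegree < n := by
    calc W.natDegree ≤ Q.natDegree * (X + C t₀).natDegree := natDegree_comp_le
    _ = Q.natDegree := by rw [natDegree_X_add_C, mul_one]
    _ < n := hn
  have hWddeg : Wd.natDegree < n := lt_of_le_of_lt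
    (le_trans (natDegree_derivative_le W) (Nat.sub_le _ _)) hWdeg
  have hWeval : ∀ x : ℝ, W.eval x = Q.eval (x + t₀) := by
    intro x; rw [hW, eval_comp]; simp
  have hb0 : (W - C (Q.eval t₀)).coeff 0 = 0 := by
    rw [coeff_sub, coeff_C_zero, coeff_zero_eq_eval_zero, hWeval, zero_add, sub_self]
  have hbk : ∀ i : ℕ, (W - C (Q.eval t₀)).coeff (i+1) = W.coeff (i+1) := by
    intro i; rw [coeff_sub, coeff_C, if_neg (Nat.succ_ne_zero i), sub_zero]
  rw [hW', Finset.sum_range_succ']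
  rw [hb0, zero_mul, add_zero]
  have step2 : ∀ i ∈ Finset.range n, (W - C (Q.eval t₀)).coeff (i+1) *
      (cInt α (i+1) * ((((i+1:ℕ):ℝ) + 1 - α) * T ^ (((i+1:ℕ):ℝ) - α)))
      = Wd.coeff i * cInt α i * T ^ ((i:ℝ) + 1 - α) := by
    intro i _
    rw [hbk i, hWd, coeff_derivative]
    push_cast
    have e : ((i:ℝ) + 1) - α = (i:ℝ) + 1 - α := by ring
    rw [e]
    linear_combination (W.coeff (i+1) * T ^ ((i:ℝ) + 1 - α)) * cInt_rec hα i
  rw [Finset.sum_congr rfl step2]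
  -- now express as an integral
  set ψ : Polynomial ℝ := W.comp (C T * X) with hψ
  have hψeval : ∀ v : ℝ, ψ.eval v = Q.eval (T * v + t₀) := by
    intro v; rw [hψ, eval_comp]; simp [hWeval]
  have hψd : ∀ v : ℝ, ψ.derivative.eval v = T * Wd.eval (T * v) := by
    intro v
    rw [hψ, derivative_comp]
    simp [hWd]
  have hsum : ∑ i ∈ Finset.range n, Wd.coeff i * cInt α i * T ^ ((i:ℝ) + 1 - α)
      = (T ^ (1 - α) * T⁻¹) * ∫ v in (0:ℝ)..1, (1 - v) ^ (-α) * ψ.derivative.eval v := by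
    rw [← intervalIntegral.integral_const_mul]
    have hint : ∀ i ∈ Finset.range n, IntervalIntegrable
        (fun v => (1 - v) ^ (-α) * (Wd.coeff i * T ^ ((i:ℝ) + 1 - α) * v ^ i)) volume 0 1 := by
      intro i _
      have h := intable_poly hα (C (Wd.coeff i * T ^ ((i:ℝ) + 1 - α)) * X ^ i)
      simpa using h
    have lhs_eq : ∀ i ∈ Finset.range n, Wd.coeff i * cInt α i * T ^ ((i:ℝ) + 1 - α)
        = ∫ v in (0:ℝ)..1, (1 - v) ^ (-α) * (Wd.coeff i * T ^ ((i:ℝ) + 1 - α) * v ^ i) := by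
      intro i _
      have e : Wd.coeff i * cInt α i * T ^ ((i:ℝ) + 1 - α)
          = (Wd.coeff i * T ^ ((i:ℝ) + 1 - α)) * ∫ v in (0:ℝ)..1, (1 - v) ^ (-α) * v ^ i := by
        rw [cInt]; ring
      rw [e, ← intervalIntegral.integral_const_mul]
      apply integral_congr; intro v _; ring
    rw [Finset.sum_congr rfl lhs_eq, ← intervalIntegral.integral_finset_sum hint]
    apply integral_congr
    intro v _
    show ∑ i ∈ Finset.range n, (1 - v) ^ (-α) * (Wd.coeff i * T ^ ((i:ℝ) + 1 - α) * v ^ i)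
      = T ^ (1 - α) * T⁻¹ * ((1 - v) ^ (-α) * ψ.derivative.eval v)
    rw [hψd v]
    have hWdv : Wd.eval (T * v) = ∑ i ∈ Finset.range n, Wd.coeff i * (T * v) ^ i :=
      eval_eq_sum_range' hWddeg (T * v)
    rw [hWdv]
    simp only [Finset.mul_sum]
    apply Finset.sum_congr rfl
    intro i _
    have hTpow : T ^ ((i:ℝ) + 1 - α) = T ^ (i:ℕ) * (T ^ (1-α)) := by
      rw [show (i:ℝ) + 1 - α = (i:ℝ) + (1 - α) by ring, Real.rpow_add hT0, Real.rpow_natCast]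
    rw [hTpow, mul_pow]
    field_simp
  rw [hsum]
  have hkey : (∫ v in (0:ℝ)..1, (1 - v) ^ (-α) * ψ.derivative.eval v) ≤ 0 := by
    apply key_nonpos hα
    · rw [hψeval]; simpa [hT] using hQt
    · intro v _; rw [hψeval]; exact hQpos _
  have hpos' : 0 ≤ T ^ (1 - α) * T⁻¹ :=
    mul_nonneg (Real.rpow_nonneg (le_of_lt hT0) _) (inv_nonneg.mpr (le_of_lt hT0))
  exact mul_nonpos_of_nonneg_of_nonpos hpos' hkey

/-- The fractional Leibniz inequality for the Caputo derivative of polynomials. -/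
theorem caputo_leibniz_inequality_polynomial (α : ℝ) (hα : α ∈ Set.Ioo (0:ℝ) 1)
    (t₀ : ℝ) (P : Polynomial ℝ) (t : ℝ) (ht : t₀ < t) :
    caputoDeriv α t₀ (fun s => P.eval s ^ 2) t
      ≤ 2 * caputoDeriv α t₀ (fun s => P.eval s) t * P.eval t := by
  set R₂ : Polynomial ℝ := P^2 - C (P.eval t₀ ^ 2) with hR₂
  set R₁ : Polynomial ℝ := P - C (P.eval t₀) with hR₁
  set Q : Polynomial ℝ := (P - C (P.eval t))^2 with hQ
  set n : ℕ := (P^2).natDegree + P.natDegree + Q.natDegree + 1 with hn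
  have hn₂ : R₂.natDegree ≤ n := by
    rw [hR₂, natDegree_sub_C]; omega
  have hn₁ : R₁.natDegree ≤ n := by
    rw [hR₁, natDegree_sub_C]; omega
  have hnQ : Q.natDegree < n := by omega
  have h2 := caputo_value hα ht (fun s => P.eval s ^ 2) R₂
    (by intro s; simp [hR₂]) hn₂
  have h1 := caputo_value hα ht (fun s => P.eval s) R₁
    (by intro s; simp [hR₁]) hn₁
  have hQ' : Q - C (Q.eval t₀) = R₂ - C (2 * P.eval t) * R₁ := by
    have he : Q.eval t₀ = (P.eval t₀ - P.eval t)^2 := by simp [hQ]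
    rw [he, hQ, hR₂, hR₁]
    simp only [C_sub, C_pow, C_mul, map_ofNat]
    ring
  have hfin := sum_nonpos hα ht Q (by simp [hQ]) (fun s => by simp [hQ]; positivity) hnQ
  rw [h2, h1]
  set Γi : ℝ := (Real.Gamma (1-α))⁻¹ with hΓ
  have hΓ0 : 0 ≤ Γi := by
    rw [hΓ]
    exact inv_nonneg.mpr (le_of_lt (Real.Gamma_pos_of_pos (by linarith [hα.2])))
  set E : ℕ → ℝ := fun k => cInt α k * (((k:ℝ) + 1 - α) * (t - t₀) ^ ((k:ℝ) - α)) with hE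
  have hsum : (∑ k ∈ Finset.range (n+1), (R₂.comp (X + C t₀)).coeff k * E k)
      - 2 * P.eval t * (∑ k ∈ Finset.range (n+1), (R₁.comp (X + C t₀)).coeff k * E k)
      = ∑ k ∈ Finset.range (n+1), ((Q - C (Q.eval t₀)).comp (X + C t₀)).coeff k * E k := by
    rw [hQ', Finset.mul_sum, ← Finset.sum_sub_distrib]
    apply Finset.sum_congr rfl
    intro k _
    simp only [hR₂, hR₁, sub_comp, mul_comp, C_comp, pow_comp, coeff_sub, coeff_C_mul]
    ring
  have hterm : Γi * ((∑ k ∈ Finset.range (n+1), (R₂.comp (X + C t₀)).coeff k * E k)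
      - 2 * P.eval t * (∑ k ∈ Finset.range (n+1), (R₁.comp (X + C t₀)).coeff k * E k)) ≤ 0 := by
    rw [hsum]
    exact mul_nonpos_of_nonneg_of_nonpos hΓ0 hfin
  nlinarith [hterm]
end

section
/- Let α ∈ (0,1), t₀ ∈ ℝ, and let P be a real polynomial. Then for every t > t₀: D^α_{t₀,t}[P(t)²] ≤ 2 [D^α_{t₀,t} P(t)] · P(t), where D^α_{t₀,t} denotes the Riemann–Liouville fractional derivative of order α at t₀. -/
open MeasureTheory Set Polynomial Filter intervalIntegral

namespace RLAux

noncomputable def bInt (α : ℝ) (k : ℕ) : ℝ := ∫ u in (0:ℝ)..1, u ^ k * (1 - u) ^ (-α)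

lemma integrable_rpow_one_sub {α : ℝ} (hα1 : α < 1) :
    IntervalIntegrable (fun u : ℝ => (1 - u) ^ (-α)) volume 0 1 := by
  have h := (intervalIntegral.intervalIntegrable_rpow' (a := 0) (b := 1) (r := -α) (by linarith)).comp_sub_left 1
  simpa using h.symm

lemma integrable_pow_mul {α : ℝ} (hα1 : α < 1) (k : ℕ) :
    IntervalIntegrable (fun u : ℝ => u ^ k * (1 - u) ^ (-α)) volume 0 1 := by
  have := (integrable_rpow_one_sub hα1).continuousOn_mul
    (f := fun u : ℝ => (1 - u) ^ (-α)) (g := fun u : ℝ => u ^ k)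
    (by fun_prop)
  simpa [mul_comm] using this

lemma bInt_zero {α : ℝ} (hα1 : α < 1) : bInt α 0 = 1 / (1 - α) := by
  have h : (∫ u in (0:ℝ)..1, (1 - u) ^ (-α)) = ∫ u in (0:ℝ)..1, u ^ (-α) := by
    have := intervalIntegral.integral_comp_sub_left (a := (0:ℝ)) (b := 1)
      (fun u : ℝ => u ^ (-α)) 1
    simpa using this
  have h2 : (∫ u in (0:ℝ)..1, u ^ (-α)) = 1 / (1 - α) := by
    rw [integral_rpow (Or.inl (by linarith))]
    rw [Real.one_rpow, Real.zero_rpow (by intro hc; linarith [hc] : -α + 1 ≠ 0)]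
    ring
  simpa [bInt, h2] using h

end RLAux
namespace RLAux

lemma beta_eq_bInt {α : ℝ} (hα1 : α < 1) (k : ℕ) :
    Complex.betaIntegral (k + 1) (1 - α) = (bInt α k : ℂ) := by
  rw [Complex.betaIntegral, bInt, ← intervalIntegral.integral_ofReal]
  refine intervalIntegral.integral_congr fun x hx => ?_
  rw [Set.uIcc_of_le (by norm_num : (0:ℝ) ≤ 1)] at hx
  have h1 : (0:ℝ) ≤ x := hx.1
  have h2 : (0:ℝ) ≤ 1 - x := by linarith [hx.2]
  have e1 : (x:ℂ) ^ ((k:ℂ) + 1 - 1) = ((x ^ k : ℝ) : ℂ) := by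
    rw [show (k:ℂ) + 1 - 1 = (k:ℂ) by ring, Complex.cpow_natCast]
    push_cast; ring
  have e2 : (1 - (x:ℂ)) ^ ((1:ℂ) - (α:ℂ) - 1) = (((1 - x) ^ (-α) : ℝ) : ℂ) := by
    rw [show (1:ℂ) - (α:ℂ) - 1 = ((-α : ℝ) : ℂ) by push_cast; ring,
      show (1 - (x:ℂ)) = (((1 - x : ℝ)) : ℂ) by push_cast; ring,
      ← Complex.ofReal_cpow h2]
  rw [e1, e2]
  push_cast
  ring

lemma beta_eq_bInt' {α : ℝ} (hα0 : 0 < α) (hα1 : α < 1) (k : ℕ) :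
    Complex.betaIntegral (k + 1) (1 - α + 1) = ((bInt α k - bInt α (k + 1) : ℝ) : ℂ) := by
  rw [Complex.betaIntegral]
  have key : (∫ u in (0:ℝ)..1, u ^ k * (1 - u) ^ (1 - α)) = bInt α k - bInt α (k+1) := by
    rw [bInt, bInt, ← intervalIntegral.integral_sub (integrable_pow_mul hα1 k)
      (integrable_pow_mul hα1 (k+1))]
    refine intervalIntegral.integral_congr fun x hx => ?_
    rw [Set.uIcc_of_le (by norm_num : (0:ℝ) ≤ 1)] at hx
    rcases eq_or_lt_of_le hx.2 with h | h
    · simp [h, Real.zero_rpow, ne_of_gt hα0, sub_pos, (by linarith : (1:ℝ) - α ≠ 0)]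
    · have hp : (0:ℝ) < 1 - x := by linarith
      have : (1 - x) ^ (1 - α) = (1 - x) * (1 - x) ^ (-α) := by
        rw [show (1:ℝ) - α = 1 + -α by ring, Real.rpow_add hp, Real.rpow_one]
      rw [this]; ring
  rw [← key, ← intervalIntegral.integral_ofReal]
  refine intervalIntegral.integral_congr fun x hx => ?_
  rw [Set.uIcc_of_le (by norm_num : (0:ℝ) ≤ 1)] at hx
  have h2 : (0:ℝ) ≤ 1 - x := by linarith [hx.2]
  have e1 : (x:ℂ) ^ ((k:ℂ) + 1 - 1) = ((x ^ k : ℝ) : ℂ) := by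
    rw [show (k:ℂ) + 1 - 1 = (k:ℂ) by ring, Complex.cpow_natCast]
    push_cast; ring
  have e2 : (1 - (x:ℂ)) ^ ((1:ℂ) - (α:ℂ) + 1 - 1) = (((1 - x) ^ (1 - α) : ℝ) : ℂ) := by
    rw [show (1:ℂ) - (α:ℂ) + 1 - 1 = ((1 - α : ℝ) : ℂ) by push_cast; ring,
      show (1 - (x:ℂ)) = (((1 - x : ℝ)) : ℂ) by push_cast; ring,
      ← Complex.ofReal_cpow h2]
  rw [e1, e2]
  push_cast
  ring

lemma bInt_rec {α : ℝ} (hα0 : 0 < α) (hα1 : α < 1) (k : ℕ) :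
    ((k:ℝ) + 2 - α) * bInt α (k + 1) = ((k:ℝ) + 1) * bInt α k := by
  have hu : 0 < Complex.re ((k:ℂ) + 1) := by simp; positivity
  have hv : 0 < Complex.re (1 - (α:ℂ)) := by
    simp [Complex.sub_re]; linarith
  have h := Complex.betaIntegral_recurrence hu hv
  rw [beta_eq_bInt' hα0 hα1 k] at h
  have h2 : ((k:ℂ) + 1 + 1) = ((k:ℕ)+1 : ℕ) + 1 := by push_cast; ring
  rw [h2, beta_eq_bInt hα1 (k+1)] at h
  have := congrArg Complex.re h
  push_cast at this ⊢
  simp [Complex.add_re, Complex.mul_re, Complex.sub_re] at this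
  nlinarith [this]

end RLAux
namespace RLAux

noncomputable def gC (α : ℝ) (k : ℕ) : ℝ := ((k:ℝ) + 1 - α) * bInt α k

lemma gC_eq {α : ℝ} (hα0 : 0 < α) (hα1 : α < 1) (n : ℕ) :
    gC α n = 1 + α * ∑ i ∈ Finset.range n, bInt α i := by
  induction n with
  | zero =>
    unfold gC
    rw [bInt_zero hα1]
    simp only [Finset.range_zero, Finset.sum_empty, mul_zero, add_zero, Nat.cast_zero]
    rw [show (0:ℝ) + 1 - α = 1 - α by ring, mul_one_div,
      div_self (by linarith : (1:ℝ) - α ≠ 0)]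
  | succ n ih =>
    have hrec := bInt_rec hα0 hα1 n
    have : gC α (n+1) = gC α n + α * bInt α n := by
      unfold gC
      push_cast
      nlinarith [hrec]
    rw [this, ih, Finset.sum_range_succ]
    ring

lemma one_sub_pow_eq {α : ℝ} (hα0 : 0 < α) (n : ℕ) :
    ∀ u ∈ Icc (0:ℝ) 1, (1 - u ^ n) * (1 - u) ^ (-α - 1)
      = ∑ i ∈ Finset.range n, u ^ i * (1 - u) ^ (-α) := by
  intro u hu
  rcases eq_or_lt_of_le hu.2 with h | h
  · subst h
    simp [Real.zero_rpow (by linarith : -α - 1 ≠ 0), Real.zero_rpow (by linarith : -α ≠ 0)]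
  · have hp : (0:ℝ) < 1 - u := by linarith
    have hgeom : (1 - u ^ n) = (∑ i ∈ Finset.range n, u ^ i) * (1 - u) := by
      have := geom_sum_mul (x := u) (n := n)
      nlinarith [this]
    have hr : (1 - u) * (1 - u) ^ (-α - 1) = (1 - u) ^ (-α) := by
      have h2 := Real.rpow_add hp 1 (-α - 1)
      rw [Real.rpow_one] at h2
      rw [← h2]
      congr 1
      ring
    calc (1 - u ^ n) * (1 - u) ^ (-α - 1)
        = (∑ i ∈ Finset.range n, u ^ i) * ((1 - u) * (1 - u) ^ (-α - 1)) := by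
          rw [hgeom]; ring
      _ = (∑ i ∈ Finset.range n, u ^ i) * (1 - u) ^ (-α) := by rw [hr]
      _ = ∑ i ∈ Finset.range n, u ^ i * (1 - u) ^ (-α) := Finset.sum_mul _ _ _

lemma J_integrable {α : ℝ} (hα0 : 0 < α) (hα1 : α < 1) (n : ℕ) :
    IntervalIntegrable (fun u : ℝ => (1 - u ^ n) * (1 - u) ^ (-α - 1)) volume 0 1 := by
  have hsum : IntervalIntegrable
      (fun u : ℝ => ∑ i ∈ Finset.range n, u ^ i * (1 - u) ^ (-α)) volume 0 1 := by
    have h2 : (fun u : ℝ => ∑ i ∈ Finset.range n, u ^ i * (1 - u) ^ (-α))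
        = ∑ i ∈ Finset.range n, fun u : ℝ => u ^ i * (1 - u) ^ (-α) := by
      ext u; simp
    rw [h2]
    exact IntervalIntegrable.sum _ (fun i _ => integrable_pow_mul hα1 i)
  refine hsum.congr ?_
  intro u hu
  rw [Set.uIoc_of_le (by norm_num : (0:ℝ) ≤ 1)] at hu
  exact (one_sub_pow_eq hα0 n u ⟨le_of_lt hu.1, hu.2⟩).symm

lemma J_val {α : ℝ} (hα0 : 0 < α) (hα1 : α < 1) (n : ℕ) :
    (∫ u in (0:ℝ)..1, (1 - u ^ n) * (1 - u) ^ (-α - 1))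
      = ∑ i ∈ Finset.range n, bInt α i := by
  rw [intervalIntegral.integral_congr (g := fun u : ℝ =>
      ∑ i ∈ Finset.range n, u ^ i * (1 - u) ^ (-α)) ?_]
  · rw [intervalIntegral.integral_finset_sum (fun i _ => integrable_pow_mul hα1 i)]
    rfl
  · intro u hu
    rw [Set.uIcc_of_le (by norm_num : (0:ℝ) ≤ 1)] at hu
    exact one_sub_pow_eq hα0 n u hu

end RLAux
namespace RLAux

lemma key_ident {α : ℝ} (hα0 : 0 < α) (hα1 : α < 1) {x : ℝ} (hx : 0 < x) (R : ℝ[X]) :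
    IntervalIntegrable
        (fun u : ℝ => (R.eval x - R.eval (x * u)) * (1 - u) ^ (-α - 1)) volume 0 1 ∧
    (R.sum fun k a => a * (gC α k * x ^ k))
      = R.eval x + α * ∫ u in (0:ℝ)..1,
          (R.eval x - R.eval (x * u)) * (1 - u) ^ (-α - 1) := by
  induction R using Polynomial.induction_on' with
  | monomial n c =>
    have hfun : (fun u : ℝ => ((monomial n c).eval x - (monomial n c).eval (x * u))
          * (1 - u) ^ (-α - 1))
        = fun u : ℝ => (c * x ^ n) * ((1 - u ^ n) * (1 - u) ^ (-α - 1)) := by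
      funext u
      simp only [eval_monomial, mul_pow]
      ring
    constructor
    · rw [hfun]
      exact (J_integrable hα0 hα1 n).const_mul _
    · rw [hfun, intervalIntegral.integral_const_mul, J_val hα0 hα1 n,
        Polynomial.sum_monomial_index _ _ (by simp), eval_monomial,
        gC_eq hα0 hα1 n]
      ring
  | add p q hp hq =>
    have hfun : (fun u : ℝ => ((p + q).eval x - (p + q).eval (x * u)) * (1 - u) ^ (-α - 1))
        = fun u : ℝ => (p.eval x - p.eval (x * u)) * (1 - u) ^ (-α - 1)
            + (q.eval x - q.eval (x * u)) * (1 - u) ^ (-α - 1) := by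
      funext u
      simp only [eval_add]
      ring
    constructor
    · rw [hfun]; exact hp.1.add hq.1
    · rw [hfun, intervalIntegral.integral_add hp.1 hq.1,
        Polynomial.sum_add_index _ _ _ (fun i => by simp) (fun a b₁ b₂ => by ring),
        hp.2, hq.2, eval_add]
      ring

lemma rl_poly {α : ℝ} (hα0 : 0 < α) (hα1 : α < 1) {t₀ t : ℝ} (ht : t₀ < t) (R : ℝ[X]) :
    riemannLiouvilleDeriv α t₀ (fun s => R.eval (s - t₀)) t
      = (Real.Gamma (1 - α))⁻¹ * ((t - t₀) ^ (-α)
          * (R.sum fun k a => a * (gC α k * (t - t₀) ^ k))) := by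
  set x := t - t₀ with hxdef
  have hx : 0 < x := by simp [hxdef]; linarith
  unfold riemannLiouvilleDeriv
  rw [deriv_const_mul_field]
  congr 1
  -- the explicit antiderivative
  set G : ℝ → ℝ := fun τ => ∑ k ∈ R.support,
    R.coeff k * bInt α k * (τ - t₀) ^ ((k : ℝ) + 1 - α) with hGdef
  have hFG : ∀ τ ∈ Ioi t₀,
      (∫ s in t₀..τ, (τ - s) ^ (-α) * R.eval (s - t₀)) = G τ := by
    intro τ hτ
    have hy : 0 < τ - t₀ := by simpa using hτ
    set y := τ - t₀ with hydef
    have h1 : (∫ s in t₀..τ, (τ - s) ^ (-α) * R.eval (s - t₀))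
        = ∫ s in (0:ℝ)..y, (y - s) ^ (-α) * R.eval s := by
      have h := intervalIntegral.integral_comp_add_right (a := (0:ℝ)) (b := y)
        (fun s => (τ - s) ^ (-α) * R.eval (s - t₀)) t₀
      simp only [zero_add] at h
      rw [show y + t₀ = τ by rw [hydef]; ring] at h
      rw [← h]
      refine intervalIntegral.integral_congr fun s _ => ?_
      have e1 : τ - (s + t₀) = y - s := by rw [hydef]; ring
      simp only [e1, add_sub_cancel_right]
    have h2 : (∫ s in (0:ℝ)..y, (y - s) ^ (-α) * R.eval s)
        = y • ∫ u in (0:ℝ)..1, (y - y * u) ^ (-α) * R.eval (y * u) := by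
      have h := intervalIntegral.integral_comp_mul_left (a := (0:ℝ)) (b := 1)
        (fun s => (y - s) ^ (-α) * R.eval s) (ne_of_gt hy)
      rw [h, mul_zero, mul_one, smul_smul, mul_inv_cancel₀ (ne_of_gt hy), one_smul]
    have h3 : (∫ u in (0:ℝ)..1, (y - y * u) ^ (-α) * R.eval (y * u))
        = ∑ k ∈ R.support,
            R.coeff k * (y ^ (-α) * y ^ k * (bInt α k)) := by
      rw [intervalIntegral.integral_congr (g := fun u : ℝ => ∑ k ∈ R.support,
          R.coeff k * (y ^ (-α) * y ^ k) * (u ^ k * (1 - u) ^ (-α)))]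
      · rw [intervalIntegral.integral_finset_sum
          (fun k _ => ((integrable_pow_mul hα1 k).const_mul _))]
        refine Finset.sum_congr rfl fun k _ => ?_
        rw [intervalIntegral.integral_const_mul]
        rw [show R.coeff k * (y ^ (-α) * y ^ k * bInt α k)
          = R.coeff k * (y ^ (-α) * y ^ k) * bInt α k by ring]
        rfl
      · intro u hu
        rw [Set.uIcc_of_le (by norm_num : (0:ℝ) ≤ 1)] at hu
        have e1 : (y - y * u) ^ (-α) = y ^ (-α) * (1 - u) ^ (-α) := by
          rw [show y - y * u = y * (1 - u) by ring,
            Real.mul_rpow (le_of_lt hy) (by linarith [hu.2])]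
        have e2 : R.eval (y * u) = ∑ k ∈ R.support, R.coeff k * (y ^ k * u ^ k) := by
          rw [eval_eq_sum, Polynomial.sum_def]
          exact Finset.sum_congr rfl fun k _ => by rw [mul_pow]
        dsimp only
        rw [e1, e2, Finset.mul_sum]
        exact Finset.sum_congr rfl fun k _ => by ring
    rw [h1, h2, h3, hGdef, Finset.smul_sum]
    refine Finset.sum_congr rfl fun k _ => ?_
    have ey : y ^ ((k:ℝ) + 1 - α) = y ^ k * (y * y ^ (-α)) := by
      rw [show (k:ℝ) + 1 - α = (k:ℝ) + (1 + -α) by ring, Real.rpow_add hy,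
        Real.rpow_add hy, Real.rpow_one, Real.rpow_natCast]
    rw [smul_eq_mul, ey]
    ring
  have hev : (fun τ => ∫ s in t₀..τ, (τ - s) ^ (-α) * R.eval (s - t₀)) =ᶠ[nhds t] G :=
    Filter.eventually_of_mem (isOpen_Ioi.mem_nhds ht) hFG
  have hG : HasDerivAt G (∑ k ∈ R.support,
      R.coeff k * bInt α k * (((k:ℝ) + 1 - α) * x ^ ((k:ℝ) + 1 - α - 1))) t := by
    refine HasDerivAt.fun_sum fun k _ => ?_
    have hbase : HasDerivAt (fun τ : ℝ => τ - t₀) 1 t := (hasDerivAt_id t).sub_const t₀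
    have h := (hbase.rpow_const (p := (k:ℝ) + 1 - α) (Or.inl (ne_of_gt hx)))
    simpa using h.const_mul (R.coeff k * bInt α k)
  rw [hev.deriv_eq, hG.deriv, Polynomial.sum_def, Finset.mul_sum]
  refine Finset.sum_congr rfl fun k _ => ?_
  have ex : x ^ ((k:ℝ) + 1 - α - 1) = x ^ k * x ^ (-α) := by
    rw [show (k:ℝ) + 1 - α - 1 = (k:ℝ) + -α by ring, Real.rpow_add hx, Real.rpow_natCast]
  rw [ex]
  unfold gC
  ring

end RLAux
namespace RLAux

lemma core_ineq {α : ℝ} (hα0 : 0 < α) (hα1 : α < 1) {x : ℝ} (hx : 0 < x) (R : ℝ[X]) :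
    ((R ^ 2).sum fun k a => a * (gC α k * x ^ k))
      ≤ 2 * (R.sum fun k a => a * (gC α k * x ^ k)) * R.eval x := by
  obtain ⟨hint2, heq2⟩ := key_ident hα0 hα1 hx (R ^ 2)
  obtain ⟨hint1, heq1⟩ := key_ident hα0 hα1 hx R
  set q := R.eval x with hq
  have heval2 : (R ^ 2).eval x = q ^ 2 := by rw [eval_pow]
  -- the difference of the integrals is an integral of a nonnegative function
  have hdiff : 2 * q * (∫ u in (0:ℝ)..1, (q - R.eval (x * u)) * (1 - u) ^ (-α - 1))
        - (∫ u in (0:ℝ)..1, ((R ^ 2).eval x - (R ^ 2).eval (x * u)) * (1 - u) ^ (-α - 1))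
      = ∫ u in (0:ℝ)..1, (q - R.eval (x * u)) ^ 2 * (1 - u) ^ (-α - 1) := by
    rw [← intervalIntegral.integral_const_mul, ← intervalIntegral.integral_sub
      (hint1.const_mul _) hint2]
    refine intervalIntegral.integral_congr fun u _ => ?_
    simp only [eval_pow]
    ring
  have hnonneg : 0 ≤ ∫ u in (0:ℝ)..1, (q - R.eval (x * u)) ^ 2 * (1 - u) ^ (-α - 1) := by
    refine intervalIntegral.integral_nonneg (by norm_num) fun u hu => ?_
    have : (0:ℝ) ≤ (1 - u) ^ (-α - 1) := Real.rpow_nonneg (by linarith [hu.2]) _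
    positivity
  have hfinal : 2 * (R.sum fun k a => a * (gC α k * x ^ k)) * q
        - ((R ^ 2).sum fun k a => a * (gC α k * x ^ k))
      = q ^ 2 + α * ∫ u in (0:ℝ)..1, (q - R.eval (x * u)) ^ 2 * (1 - u) ^ (-α - 1) := by
    rw [heq1, heq2, ← hdiff, heval2]
    ring
  nlinarith [sq_nonneg q, mul_nonneg hα0.le hnonneg, hfinal]

end RLAux

/-- The fractional Leibniz inequality for the Riemann–Liouville derivative of
polynomials. -/
theorem riemannLiouville_leibniz_inequality_polynomial (α : ℝ) (hα : α ∈ Set.Ioo (0:ℝ) 1)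
    (t₀ : ℝ) (P : Polynomial ℝ) (t : ℝ) (ht : t₀ < t) :
    riemannLiouvilleDeriv α t₀ (fun s => P.eval s ^ 2) t
      ≤ 2 * riemannLiouvilleDeriv α t₀ (fun s => P.eval s) t * P.eval t := by
  obtain ⟨hα0, hα1⟩ := hα
  set R : Polynomial ℝ := P.comp (Polynomial.X + Polynomial.C t₀) with hRdef
  have hRe : ∀ s : ℝ, R.eval (s - t₀) = P.eval s := by
    intro s
    rw [hRdef, Polynomial.eval_comp]
    simp
  have h1 : (fun s : ℝ => P.eval s) = fun s : ℝ => R.eval (s - t₀) := by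
    funext s; rw [hRe]
  have h2 : (fun s : ℝ => P.eval s ^ 2) = fun s : ℝ => (R ^ 2).eval (s - t₀) := by
    funext s; rw [Polynomial.eval_pow, hRe]
  rw [h1, h2, RLAux.rl_poly hα0 hα1 ht, RLAux.rl_poly hα0 hα1 ht]
  set x := t - t₀ with hxdef
  have hx : 0 < x := by rw [hxdef]; linarith
  have hq : P.eval t = R.eval x := by rw [← hRe t]
  have hΓ : 0 < (Real.Gamma (1 - α))⁻¹ :=
    inv_pos.mpr (Real.Gamma_pos_of_pos (by linarith))
  have hxp : 0 < x ^ (-α) := Real.rpow_pos_of_pos hx _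
  have hcore := RLAux.core_ineq hα0 hα1 hx R
  rw [hq]
  calc (Real.Gamma (1 - α))⁻¹ * (x ^ (-α) * ((R ^ 2).sum fun k a => a * (RLAux.gC α k * x ^ k)))
      = ((Real.Gamma (1 - α))⁻¹ * x ^ (-α))
          * ((R ^ 2).sum fun k a => a * (RLAux.gC α k * x ^ k)) := by ring
    _ ≤ ((Real.Gamma (1 - α))⁻¹ * x ^ (-α))
          * (2 * (R.sum fun k a => a * (RLAux.gC α k * x ^ k)) * R.eval x) :=
        mul_le_mul_of_nonneg_left hcore (by positivity)
    _ = 2 * ((Real.Gamma (1 - α))⁻¹ * (x ^ (-α)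
          * (R.sum fun k a => a * (RLAux.gC α k * x ^ k)))) * R.eval x := by ring
end

section
/- Let α ∈ (0,1) and λ < 2. Then there exists a real polynomial Q and a point t > 0 such that cD^α_{0,t}[Q(t)²] > λ [cD^α_{0,t} Q(t)] · Q(t). In particular, the constant 2 is sharp in the Caputo fractional Leibniz inequality. (For λ ≤ 2/(2−α) the choice Q(t) = t+1 works for all t > 0; for 2/(2−α) < λ < 2 the same polynomial works for 0 < t < (2−α)(2−λ)/(λ(2−α)−2).) -/
lemma poly_int (α : ℝ) (hα : α ∈ Set.Ioo (0:ℝ) 1) (a b c τ : ℝ) (hτ : 0 < τ) :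
    ∫ v in (0:ℝ)..τ, v ^ (-α) * (a + b*v + c*v^2)
      = a*τ^(1-α)/(1-α) + b*τ^(2-α)/(2-α) + c*τ^(3-α)/(3-α) := by
  obtain ⟨h0, h1⟩ := hα
  have key : ∀ v ∈ Set.uIcc (0:ℝ) τ,
      v ^ (-α) * (a + b*v + c*v^2) = a * v^(-α) + b * v^(1-α) + c * v^(2-α) := by
    intro v hv
    rcases eq_or_lt_of_le ((Set.uIcc_of_le hτ.le ▸ hv).1) with h | h
    · rw [← h]
      rw [Real.zero_rpow (by linarith), Real.zero_rpow (by linarith),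
        Real.zero_rpow (by linarith)]
      ring
    · rw [show (1:ℝ)-α = -α + 1 by ring, show (2:ℝ)-α = -α + 2 by ring,
        Real.rpow_add h, Real.rpow_add h, Real.rpow_one,
        Real.rpow_two]
      ring
  rw [intervalIntegral.integral_congr key]
  have i0 : IntervalIntegrable (fun v : ℝ => v ^ (-α)) MeasureTheory.volume 0 τ :=
    intervalIntegral.intervalIntegrable_rpow' (by linarith)
  have i1 : IntervalIntegrable (fun v : ℝ => v ^ (1-α)) MeasureTheory.volume 0 τ :=
    intervalIntegral.intervalIntegrable_rpow' (by linarith)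
  have i2 : IntervalIntegrable (fun v : ℝ => v ^ (2-α)) MeasureTheory.volume 0 τ :=
    intervalIntegral.intervalIntegrable_rpow' (by linarith)
  rw [intervalIntegral.integral_add ((i0.const_mul a).add (i1.const_mul b)) (i2.const_mul c),
    intervalIntegral.integral_add (i0.const_mul a) (i1.const_mul b),
    intervalIntegral.integral_const_mul, intervalIntegral.integral_const_mul,
    intervalIntegral.integral_const_mul,
    integral_rpow (Or.inl (by linarith)), integral_rpow (Or.inl (by linarith)),
    integral_rpow (Or.inl (by linarith)),
    Real.zero_rpow (by linarith : -α + 1 ≠ 0), Real.zero_rpow (by linarith : 1-α + 1 ≠ 0),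
    Real.zero_rpow (by linarith : 2-α + 1 ≠ 0)]
  rw [show -α + 1 = 1 - α by ring, show 1 - α + 1 = 2 - α by ring,
    show 2 - α + 1 = 3 - α by ring]
  ring

lemma int1 (α : ℝ) (hα : α ∈ Set.Ioo (0:ℝ) 1) (τ : ℝ) (hτ : 0 < τ) :
    ∫ s in (0:ℝ)..τ, (τ - s) ^ (-α) * s = τ^(2-α)/((1-α)*(2-α)) := by
  have h := intervalIntegral.integral_comp_sub_left (a := 0) (b := τ)
    (fun v => v ^ (-α) * (τ - v)) τ
  simp only [sub_self, sub_zero, sub_sub_cancel] at h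
  rw [h]
  have h2 : ∀ v ∈ Set.uIcc (0:ℝ) τ, v ^ (-α) * (τ - v) = v ^ (-α) * (τ + (-1)*v + 0*v^2) := by
    intro v _; ring
  rw [intervalIntegral.integral_congr h2, poly_int α hα _ _ _ _ hτ]
  have e : τ^(2-α) = τ * τ^(1-α) := by
    rw [show (2:ℝ)-α = 1 + (1-α) by ring, Real.rpow_add hτ, Real.rpow_one]
  obtain ⟨h0, h1⟩ := hα
  have n1 : (1:ℝ)-α ≠ 0 := by linarith
  have n2 : (2:ℝ)-α ≠ 0 := by linarith
  rw [e]
  field_simp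
  ring

lemma int2 (α : ℝ) (hα : α ∈ Set.Ioo (0:ℝ) 1) (τ : ℝ) (hτ : 0 < τ) :
    ∫ s in (0:ℝ)..τ, (τ - s) ^ (-α) * (s^2 + 2*s)
      = 2*τ^(3-α)/((1-α)*(2-α)*(3-α)) + 2*τ^(2-α)/((1-α)*(2-α)) := by
  have h := intervalIntegral.integral_comp_sub_left (a := 0) (b := τ)
    (fun v => v ^ (-α) * ((τ - v)^2 + 2*(τ - v))) τ
  simp only [sub_self, sub_zero, sub_sub_cancel] at h
  rw [h]
  have h2 : ∀ v ∈ Set.uIcc (0:ℝ) τ, v ^ (-α) * ((τ-v)^2 + 2*(τ-v))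
      = v ^ (-α) * ((τ^2+2*τ) + (-2*τ-2)*v + 1*v^2) := by
    intro v _; ring
  rw [intervalIntegral.integral_congr h2, poly_int α hα _ _ _ _ hτ]
  have e2 : τ^(2-α) = τ * τ^(1-α) := by
    rw [show (2:ℝ)-α = 1 + (1-α) by ring, Real.rpow_add hτ, Real.rpow_one]
  have e3 : τ^(3-α) = τ^2 * τ^(1-α) := by
    rw [show (3:ℝ)-α = 2 + (1-α) by ring, Real.rpow_add hτ, Real.rpow_two]
  obtain ⟨h0, h1⟩ := hα
  have n1 : (1:ℝ)-α ≠ 0 := by linarith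
  have n2 : (2:ℝ)-α ≠ 0 := by linarith
  have n3 : (3:ℝ)-α ≠ 0 := by linarith
  rw [e2, e3]
  field_simp
  ring

lemma cap1 (α : ℝ) (hα : α ∈ Set.Ioo (0:ℝ) 1) (t : ℝ) (ht : 0 < t) :
    caputoDeriv α 0 (fun s => s + 1) t = t^(1-α) / (Real.Gamma (1-α) * (1-α)) := by
  obtain ⟨h0, h1⟩ := hα
  have n1 : (1:ℝ)-α ≠ 0 := by linarith
  have n2 : (2:ℝ)-α ≠ 0 := by linarith
  have hG : 0 < Real.Gamma (1-α) := Real.Gamma_pos_of_pos (by linarith)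
  unfold caputoDeriv riemannLiouvilleDeriv
  have hev : (fun τ => (Real.Gamma (1-α))⁻¹ *
        ∫ s in (0:ℝ)..τ, (τ - s)^(-α) * ((fun s => s + 1) s - (fun s => s + 1) 0))
      =ᶠ[nhds t] fun τ => ((Real.Gamma (1-α))⁻¹ / ((1-α)*(2-α))) * τ^(2-α) := by
    filter_upwards [Ioi_mem_nhds ht] with τ hτ
    have h3 : (fun s : ℝ => (τ-s)^(-α) * ((fun s => s + 1) s - (fun s => s + 1) 0))
        = fun s => (τ-s)^(-α) * s := by
      funext s; simp only []; ring
    rw [h3, int1 α ⟨h0, h1⟩ τ hτ]; ring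
  rw [hev.deriv_eq,
    ((Real.hasDerivAt_rpow_const (p := 2-α) (Or.inl ht.ne')).const_mul
      ((Real.Gamma (1-α))⁻¹ / ((1-α)*(2-α)))).deriv,
    show (2:ℝ)-α-1 = 1-α by ring]
  field_simp

lemma cap2 (α : ℝ) (hα : α ∈ Set.Ioo (0:ℝ) 1) (t : ℝ) (ht : 0 < t) :
    caputoDeriv α 0 (fun s => (s + 1)^2) t
      = (2*t^(2-α)/((1-α)*(2-α)) + 2*t^(1-α)/(1-α)) / Real.Gamma (1-α) := by
  obtain ⟨h0, h1⟩ := hα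
  have n1 : (1:ℝ)-α ≠ 0 := by linarith
  have n2 : (2:ℝ)-α ≠ 0 := by linarith
  have n3 : (3:ℝ)-α ≠ 0 := by linarith
  have hG : 0 < Real.Gamma (1-α) := Real.Gamma_pos_of_pos (by linarith)
  unfold caputoDeriv riemannLiouvilleDeriv
  have hev : (fun τ => (Real.Gamma (1-α))⁻¹ *
        ∫ s in (0:ℝ)..τ, (τ - s)^(-α) * ((fun s => (s + 1)^2) s - (fun s => (s + 1)^2) 0))
      =ᶠ[nhds t] fun τ =>
        ((Real.Gamma (1-α))⁻¹ * (2/((1-α)*(2-α)*(3-α)))) * τ^(3-α)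
        + ((Real.Gamma (1-α))⁻¹ * (2/((1-α)*(2-α)))) * τ^(2-α) := by
    filter_upwards [Ioi_mem_nhds ht] with τ hτ
    have h3 : (fun s : ℝ => (τ-s)^(-α) * ((fun s => (s + 1)^2) s - (fun s => (s + 1)^2) 0))
        = fun s => (τ-s)^(-α) * (s^2 + 2*s) := by
      funext s; simp only []; ring
    rw [h3, int2 α ⟨h0, h1⟩ τ hτ]; ring
  rw [hev.deriv_eq,
    (((Real.hasDerivAt_rpow_const (p := 3-α) (Or.inl ht.ne')).const_mul
      ((Real.Gamma (1-α))⁻¹ * (2/((1-α)*(2-α)*(3-α))))).fun_add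
     ((Real.hasDerivAt_rpow_const (p := 2-α) (Or.inl ht.ne')).const_mul
      ((Real.Gamma (1-α))⁻¹ * (2/((1-α)*(2-α)))))).deriv,
    show (3:ℝ)-α-1 = 2-α by ring, show (2:ℝ)-α-1 = 1-α by ring]
  field_simp


/-- Sharpness of the constant 2 in the Caputo fractional Leibniz inequality: for any
λ < 2 there are a polynomial Q and a time t > 0 at which the inequality with constant λ
fails. -/
theorem caputo_leibniz_constant_sharp (α : ℝ) (hα : α ∈ Set.Ioo (0:ℝ) 1)
    (lam : ℝ) (hlam : lam < 2) :
    ∃ Q : Polynomial ℝ, ∃ t : ℝ, 0 < t ∧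
      lam * (caputoDeriv α 0 (fun s => Q.eval s) t * Q.eval t)
        < caputoDeriv α 0 (fun s => Q.eval s ^ 2) t := by
  obtain ⟨h0, h1⟩ := hα
  set m : ℝ := max lam 1 with hm
  have hm1 : (1:ℝ) ≤ m := le_max_right _ _
  have hml : lam ≤ m := le_max_left _ _
  have hm0 : (0:ℝ) < m := by linarith
  set t : ℝ := (2 - lam) / m with htdef
  have ht : 0 < t := div_pos (by linarith) hm0
  refine ⟨Polynomial.X + 1, t, ht, ?_⟩
  have hQ : (fun s : ℝ => (Polynomial.X + 1 : Polynomial ℝ).eval s) = fun s => s + 1 := by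
    funext s; simp
  have hQ2 : (fun s : ℝ => (Polynomial.X + 1 : Polynomial ℝ).eval s ^ 2)
      = fun s => (s + 1)^2 := by
    funext s; simp
  have hQt : (Polynomial.X + 1 : Polynomial ℝ).eval t = t + 1 := by simp
  rw [hQ, hQ2, hQt, cap1 α ⟨h0, h1⟩ t ht, cap2 α ⟨h0, h1⟩ t ht]
  -- key bound : lam * (t+1) ≤ 2
  have hkey : lam * (t + 1) ≤ 2 := by
    have hx : 0 < (2 - lam) / m := ht
    have h2 : lam * ((2 - lam) / m) ≤ m * ((2 - lam) / m) :=
      mul_le_mul_of_nonneg_right hml hx.le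
    have h3 : m * ((2 - lam) / m) = 2 - lam := by field_simp
    rw [htdef]; nlinarith
  have n1 : (1:ℝ)-α ≠ 0 := by linarith
  have n2 : (2:ℝ)-α ≠ 0 := by linarith
  have hG : 0 < Real.Gamma (1-α) := Real.Gamma_pos_of_pos (by linarith)
  have e2 : t^(2-α) = t * t^(1-α) := by
    rw [show (2:ℝ)-α = 1 + (1-α) by ring, Real.rpow_add ht, Real.rpow_one]
  rw [← sub_pos, e2]
  have heq : (2*(t * t^(1-α))/((1-α)*(2-α)) + 2*t^(1-α)/(1-α)) / Real.Gamma (1-α)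
      - lam * (t^(1-α) / (Real.Gamma (1-α) * (1-α)) * (t+1))
      = (t^(1-α) / (Real.Gamma (1-α) * (1-α))) * ((2 - lam*(t+1)) + 2*t/(2-α)) := by
    field_simp
    ring
  rw [heq]
  have hP : 0 < t^(1-α) := Real.rpow_pos_of_pos ht _
  apply mul_pos (div_pos hP (mul_pos hG (by linarith)))
  have h4 : 0 < 2*t/(2-α) := div_pos (by linarith) (by linarith)
  linarith
end
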